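/- arXiv:1705.09096 — 5 statements merged into one kernel-verified Lean document; each statement's English description precedes it below -/
import Mathlib

section
/- Let κ be a field and M a finite-dimensional κ-vector space equipped with a skew-symmetric nondegenerate bilinear form ω (i.e., ω(a,b) = -ω(b,a) for all a,b, and the form induces an isomorphism M → M*). If dim M ≥ 2, then M has a 2-dimensional subspace on which the restriction of ω is nondegenerate. -/
open LinearMap (BilinForm)
open Module

section aux
variable {κ M : Type*} [Field κ] [AddCommGroup M] [Module κ M]
    [FiniteDimensional κ M] (ω : BilinForm κ M)

omit [FiniteDimensional κ M] in
lemma aux_solve {x y : M} (h : ω x x * ω y y - ω x y * ω y x ≠ 0)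
    (s t : κ) (h1 : ω (s • x + t • y) x = 0) (h2 : ω (s • x + t • y) y = 0) :
    s = 0 ∧ t = 0 := by
  simp only [map_add, map_smul, LinearMap.add_apply, LinearMap.smul_apply, smul_eq_mul] at h1 h2
  constructor
  · have hs : s * (ω x x * ω y y - ω x y * ω y x) = 0 := by
      linear_combination (ω y y) * h1 - (ω y x) * h2
    rcases mul_eq_zero.mp hs with h' | h'
    · exact h'
    · exact absurd h' h
  · have ht : t * (ω x x * ω y y - ω x y * ω y x) = 0 := by
      linear_combination (ω x x) * h2 - (ω x y) * h1
    rcases mul_eq_zero.mp ht with h' | h'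
    · exact h'
    · exact absurd h' h

omit [FiniteDimensional κ M] in
lemma aux_key {x y : M} (h : ω x x * ω y y - ω x y * ω y x ≠ 0) :
    ∃ L : Submodule κ M, finrank κ L = 2 ∧ (ω.restrict L).Nondegenerate := by
  have li : LinearIndependent κ ![x, y] := by
    rw [LinearIndependent.pair_iff]
    intro s t hst
    exact aux_solve ω h s t (by rw [hst]; simp) (by rw [hst]; simp)
  refine ⟨Submodule.span κ {x, y}, ?_, ?_⟩
  · have : ({x, y} : Set M) = Set.range ![x, y] := by simp [Set.pair_comm]
    rw [this, finrank_span_eq_card li]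
    simp
  · refine ⟨?_, ?_⟩
    all_goals intro z hz
    · obtain ⟨s, t, hst⟩ := Submodule.mem_span_pair.mp z.2
      have hx : (x : M) ∈ Submodule.span κ ({x, y} : Set M) :=
        Submodule.subset_span (by simp)
      have hy : (y : M) ∈ Submodule.span κ ({x, y} : Set M) :=
        Submodule.subset_span (by simp)
      have e1 := hz ⟨x, hx⟩
      have e2 := hz ⟨y, hy⟩
      rw [LinearMap.BilinForm.restrict_apply] at e1 e2
      obtain ⟨hs, ht⟩ := aux_solve ω h s t (by rw [hst]; exact e1) (by rw [hst]; exact e2)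
      ext
      rw [← hst, hs, ht]
      simp
    · obtain ⟨s, t, hst⟩ := Submodule.mem_span_pair.mp z.2
      have hx : (x : M) ∈ Submodule.span κ ({x, y} : Set M) :=
        Submodule.subset_span (by simp)
      have hy : (y : M) ∈ Submodule.span κ ({x, y} : Set M) :=
        Submodule.subset_span (by simp)
      have e1 := hz ⟨x, hx⟩
      have e2 := hz ⟨y, hy⟩
      rw [LinearMap.BilinForm.restrict_apply] at e1 e2
      have h' : ω.flip x x * ω.flip y y - ω.flip x y * ω.flip y x ≠ 0 := by
        change ω x x * ω y y - ω y x * ω x y ≠ 0; rwa [mul_comm (ω y x)]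
      obtain ⟨hs, ht⟩ := aux_solve ω.flip h' s t (by rw [hst]; exact e1)
        (by rw [hst]; exact e2)
      ext
      rw [← hst, hs, ht]
      simp

end aux

/-- A finite-dimensional vector space with a skew-symmetric nondegenerate
bilinear form of dimension ≥ 2 has a 2-dimensional subspace on which the restriction
of the form is nondegenerate. -/
theorem stmt_0 {κ M : Type*} [Field κ] [AddCommGroup M] [Module κ M]
    [FiniteDimensional κ M] (ω : BilinForm κ M)
    (hskew : ∀ a b : M, ω a b = - ω b a)
    (hnd : ω.Nondegenerate)
    (hdim : 2 ≤ finrank κ M) :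
    ∃ L : Submodule κ M, finrank κ L = 2 ∧ (ω.restrict L).Nondegenerate := by
  have hpos : 0 < finrank κ M := by omega
  have : Nontrivial M := Module.nontrivial_of_finrank_pos hpos
  by_cases halt : ∀ x : M, ω x x = 0
  · -- alternating case
    obtain ⟨u, hu⟩ := exists_ne (0 : M)
    obtain ⟨v, hv⟩ : ∃ v, ω u v ≠ 0 := by
      by_contra hc
      push_neg at hc
      exact hu (hnd.1 u hc)
    refine aux_key ω (x := u) (y := v) ?_
    rw [halt u, halt v, hskew v u]
    simpa using fun h => hv h
  · push_neg at halt
    obtain ⟨u, hu⟩ := halt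
    have hrange : finrank κ (LinearMap.range (ω u)) ≤ 1 := by
      simpa using Submodule.finrank_le (LinearMap.range (ω u))
    have hker : 1 ≤ finrank κ (LinearMap.ker (ω u)) := by
      have := LinearMap.finrank_range_add_finrank_ker (ω u)
      omega
    by_cases hdiag : ∃ v, ω u v = 0 ∧ ω v v ≠ 0
    · obtain ⟨v, hvW, hv⟩ := hdiag
      refine aux_key ω (x := u) (y := v) ?_
      have h2 : ω v u = 0 := by rw [hskew, hvW, neg_zero]
      rw [hvW, h2]
      simpa using mul_ne_zero hu hv
    · push_neg at hdiag
      by_cases hoff : ∃ v, ω u v = 0 ∧ ∃ w, ω u w = 0 ∧ ω v w ≠ 0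
      · obtain ⟨v, hvW, w, hwW, hvw⟩ := hoff
        refine aux_key ω (x := v) (y := w) ?_
        rw [hdiag v hvW, hdiag w hwW, hskew w v]
        simpa using fun h => hvw h
      · exfalso
        push_neg at hoff
        obtain ⟨w, hwW, hw⟩ : ∃ w, ω u w = 0 ∧ w ≠ 0 := by
          by_contra hc
          push_neg at hc
          have hbot : LinearMap.ker (ω u) = ⊥ := by
            rw [Submodule.eq_bot_iff]
            exact fun x hx => hc x hx
          rw [hbot] at hker
          simp at hker
        apply hw
        apply hnd.1
        intro x
        have hxdec : ω u (x - (ω u x / ω u u) • u) = 0 := by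
          simp only [map_sub, map_smul, smul_eq_mul]
          field_simp
          simp
        have h1 : ω w (x - (ω u x / ω u u) • u) = 0 := hoff w hwW _ hxdec
        have h2 : ω w u = 0 := by rw [hskew, hwW, neg_zero]
        rw [map_sub, map_smul, h2, smul_eq_mul, mul_zero, sub_zero] at h1
        exact h1
end

section
/- Let R be a commutative local ring with maximal ideal 𝔪 and residue field κ = R/𝔪, and let M be a finitely generated free R-module of rank n = 2t > 0 with a skew-symmetric bilinear form ω: M × M → R that is nondegenerate (the Gram determinant of some basis is a unit). Let ρ: M → M ⊗ κ denote reduction mod 𝔪. If B₁ ∈ M and ρ(B₁) = b₁ is part of a symplectic basis (a₁, b₁, ..., a_t, b_t) of the κ-vector space M ⊗ κ for the induced form, then B₁ can be completed to a symplectic basis C = (A₁, B₁, ..., A_t, B_t) of M over R with ρ(C) = (a₁, b₁, ..., a_t, b_t). -/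
open Module

/-- A basis of an `R`-module indexed by `Fin t ⊕ Fin t` is symplectic for a bilinear
form `ω` if, writing `Aᵢ = C (inl i)` and `Bᵢ = C (inr i)`, we have `ω(Aᵢ,Bᵢ) = 1`
and `ω(Aᵢ,Bⱼ) = ω(Aᵢ,Aⱼ) = ω(Bᵢ,Bⱼ) = 0` for `i ≠ j`. -/
def IsSymplecticBasisR {R M : Type*} [CommRing R] [AddCommGroup M] [Module R M]
    {t : ℕ} (ω : M →ₗ[R] M →ₗ[R] R) (C : Basis (Fin t ⊕ Fin t) R M) : Prop :=
  (∀ i : Fin t, ω (C (Sum.inl i)) (C (Sum.inr i)) = 1) ∧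
  (∀ i j : Fin t, i ≠ j →
    ω (C (Sum.inl i)) (C (Sum.inr j)) = 0 ∧
    ω (C (Sum.inl i)) (C (Sum.inl j)) = 0 ∧
    ω (C (Sum.inr i)) (C (Sum.inr j)) = 0)

/-- lifting a symplectic basis of the reduction mod the maximal ideal.
Here `R` is a commutative local ring with residue field `κ`, `M` is a free `R`-module
of rank `2t > 0` carrying a skew-symmetric bilinear form `ω` whose Gram determinant on
some basis is a unit (nondegeneracy).  The reduction `M ⊗ κ` is modelled by a
`κ`-vector space `Mk` together with a surjective additive map `ρ : M → Mk` whose kernel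
is `𝔪M`, compatible with scalars, and carrying the induced form `ωk`
(`ωk (ρ x) (ρ y) = residue (ω x y)`).  If `B₁ ∈ M` reduces to the element `b₁` of a
symplectic basis `(a₁, b₁, …, a_t, b_t)` of `Mk`, then `B₁` completes to a symplectic
basis `C = (A₁, B₁, …, A_t, B_t)` of `M` over `R` reducing to the given basis. -/
theorem stmt_5 {R M : Type*} [CommRing R] [IsLocalRing R]
    [AddCommGroup M] [Module R M] {t : ℕ} (ht : 0 < t)
    (ω : M →ₗ[R] M →ₗ[R] R)
    (hskew : ∀ a b : M, ω a b = - ω b a)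
    (c : Basis (Fin (2 * t)) R M)
    (hnd : IsUnit (Matrix.det (Matrix.of fun i j => ω (c i) (c j))))
    -- the reduction mod the maximal ideal
    {Mk : Type*} [AddCommGroup Mk] [Module (IsLocalRing.ResidueField R) Mk]
    (ρ : M →+ Mk)
    (hρsur : Function.Surjective ρ)
    (hρsmul : ∀ (r : R) (m : M), ρ (r • m) = (IsLocalRing.residue R r) • ρ m)
    (hρker : ∀ m : M, ρ m = 0 ↔ m ∈ (IsLocalRing.maximalIdeal R • ⊤ : Submodule R M))
    -- the induced symplectic form on the reduction
    (ωk : Mk →ₗ[IsLocalRing.ResidueField R] Mk →ₗ[IsLocalRing.ResidueField R]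
      (IsLocalRing.ResidueField R))
    (hcomp : ∀ x y : M, ωk (ρ x) (ρ y) = IsLocalRing.residue R (ω x y))
    -- a symplectic basis of the reduction whose element `b₁` lifts to `B₁ ∈ M`
    (d : Basis (Fin t ⊕ Fin t) (IsLocalRing.ResidueField R) Mk)
    (hd : IsSymplecticBasisR ωk d)
    (B₁ : M) (hB₁ : ρ B₁ = d (Sum.inr ⟨0, ht⟩)) :
    ∃ C : Basis (Fin t ⊕ Fin t) R M, IsSymplecticBasisR ω C ∧
      C (Sum.inr ⟨0, ht⟩) = B₁ ∧ ∀ i, ρ (C i) = d i := by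
  classical
  -- basic facts about the residue map
  have hres0 : ∀ a : R, IsLocalRing.residue R a = 0 ↔ a ∈ IsLocalRing.maximalIdeal R :=
    fun a => IsLocalRing.residue_eq_zero_iff a
  have hunit : ∀ a : R, IsLocalRing.residue R a ≠ 0 → IsUnit a := by
    intro a h
    by_contra hn
    exact h ((hres0 a).mpr ((IsLocalRing.mem_maximalIdeal a).mpr (mem_nonunits_iff.mpr hn)))
  -- the induced form is skew-symmetric
  have hskewk : ∀ x y : Mk, ωk x y = - ωk y x := by
    intro x y
    obtain ⟨a, rfl⟩ := hρsur x
    obtain ⟨b, rfl⟩ := hρsur y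
    rw [hcomp, hcomp, hskew, map_neg]
  -- vanishing of the induced form between distinct pairs of the symplectic basis `d`
  have hdcross : ∀ (i : Fin t) (j : Fin t ⊕ Fin t), j ≠ Sum.inl i → j ≠ Sum.inr i →
      ωk (d j) (d (Sum.inl i)) = 0 ∧ ωk (d j) (d (Sum.inr i)) = 0 := by
    rintro i (j | j) h1 h2
    · have hji : j ≠ i := fun h => h1 (by rw [h])
      exact ⟨(hd.2 j i hji).2.1, (hd.2 j i hji).1⟩
    · have hji : j ≠ i := fun h => h2 (by rw [h])
      refine ⟨?_, (hd.2 j i hji).2.2⟩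
      rw [hskewk, (hd.2 i j (fun h => hji h.symm)).1, neg_zero]
  -- a basis of `M` indexed by `Fin t ⊕ Fin t`
  let eqv : Fin (2 * t) ≃ Fin t ⊕ Fin t := (finCongr (two_mul t)).trans finSumFinEquiv.symm
  set c' : Basis (Fin t ⊕ Fin t) R M := c.reindex eqv with hc'
  -- coordinates (w.r.t. `c'`) of elements of `𝔪M` lie in `𝔪`
  have hrepr_mem : ∀ x : M, ρ x = 0 → ∀ i, c'.repr x i ∈ IsLocalRing.maximalIdeal R := by
    intro x hx i
    have hx' : x ∈ (IsLocalRing.maximalIdeal R) • (⊤ : Submodule R M) := (hρker x).mp hx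
    rw [← c'.span_eq] at hx'
    obtain ⟨a, ha, hax⟩ := (Submodule.mem_ideal_smul_span_iff_exists_sum
      (IsLocalRing.maximalIdeal R) (⇑c') x).mp hx'
    have hxa : x = c'.repr.symm a := by
      rw [Basis.repr_symm_apply, Finsupp.linearCombination_apply]
      exact hax.symm
    have : c'.repr x = a := by rw [hxa, LinearEquiv.apply_symm_apply]
    rw [this]
    exact ha i
  -- the reduction of `c'` is a `κ`-basis of `Mk`
  have hLI : LinearIndependent (IsLocalRing.ResidueField R)
      (fun i : Fin t ⊕ Fin t => ρ (c' i)) := by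
    rw [Fintype.linearIndependent_iff]
    intro g hg i
    choose gl hgl using fun i => IsLocalRing.residue_surjective (R := R) (g i)
    have hsum : ρ (∑ i, gl i • c' i) = 0 := by
      rw [map_sum]
      simp_rw [hρsmul, hgl]
      exact hg
    have hmem := hrepr_mem _ hsum i
    have hco : c'.repr (∑ i, gl i • c' i) i = gl i := by rw [Basis.repr_sum_self]
    rw [hco] at hmem
    rw [← hgl i]
    exact (hres0 _).mpr hmem
  have hSP : ⊤ ≤ Submodule.span (IsLocalRing.ResidueField R)
      (Set.range fun i : Fin t ⊕ Fin t => ρ (c' i)) := by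
    rintro z -
    obtain ⟨x, rfl⟩ := hρsur z
    have hxs : ρ x = ∑ i, IsLocalRing.residue R (c'.repr x i) • ρ (c' i) := by
      conv_lhs => rw [← c'.sum_repr x]
      rw [map_sum]
      simp_rw [hρsmul]
    rw [hxs]
    exact Submodule.sum_mem _ fun i _ => Submodule.smul_mem _ _
      (Submodule.subset_span (Set.mem_range_self i))
  let e' : Basis (Fin t ⊕ Fin t) (IsLocalRing.ResidueField R) Mk := Basis.mk hLI hSP
  have he' : ∀ i, e' i = ρ (c' i) := fun i => Basis.mk_apply hLI hSP i
  -- compatibility of coordinates with reduction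
  have hrepr : ∀ (x : M) (i), IsLocalRing.residue R (c'.repr x i) = e'.repr (ρ x) i := by
    intro x i
    have hx : ρ x = ∑ j, IsLocalRing.residue R (c'.repr x j) • e' j := by
      conv_lhs => rw [← c'.sum_repr x]
      rw [map_sum]
      simp_rw [hρsmul, ← he']
    rw [hx, Basis.repr_sum_self]
  -- the Gram matrix of `ωk` on the reduced basis has nonzero determinant
  have hG : IsUnit (Matrix.det (Matrix.of fun i j : Fin t ⊕ Fin t => ω (c' i) (c' j))) := by
    have heq : (Matrix.of fun i j : Fin t ⊕ Fin t => ω (c' i) (c' j)) =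
        (Matrix.of fun i j => ω (c i) (c j)).submatrix eqv.symm eqv.symm := by
      ext i j
      simp [hc', Basis.reindex_apply, Matrix.submatrix_apply]
    rw [heq, Matrix.det_submatrix_equiv_self]
    exact hnd
  have hGk : Matrix.det (Matrix.of fun i j : Fin t ⊕ Fin t => ωk (ρ (c' i)) (ρ (c' j))) ≠ 0 := by
    have heq : (Matrix.of fun i j : Fin t ⊕ Fin t => ωk (ρ (c' i)) (ρ (c' j))) =
        (IsLocalRing.residue R).mapMatrix (Matrix.of fun i j => ω (c' i) (c' j)) := by
      ext i j
      simp [RingHom.mapMatrix_apply, Matrix.map_apply, hcomp]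
    rw [heq, ← RingHom.map_det]
    exact (hG.map _).ne_zero
  -- nondegeneracy of `ωk`
  have hndk : ∀ x : Mk, (∀ y : Mk, ωk x y = 0) → x = 0 := by
    intro x hx
    have hv0 : ∀ j, (Matrix.vecMul (fun i => e'.repr x i)
        (Matrix.of fun i j : Fin t ⊕ Fin t => ωk (ρ (c' i)) (ρ (c' j)))) j = 0 := by
      intro j
      have hsum : ωk (∑ i, e'.repr x i • e' i) (ρ (c' j)) = 0 := by
        rw [e'.sum_repr x]
        exact hx _
      simp only [map_sum, map_smul, LinearMap.sum_apply, LinearMap.smul_apply,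
        smul_eq_mul, he'] at hsum
      simpa [Matrix.vecMul, dotProduct] using hsum
    have hg : (fun i => e'.repr x i) = 0 :=
      Matrix.eq_zero_of_vecMul_eq_zero hGk (funext hv0)
    rw [← e'.sum_repr x]
    refine Finset.sum_eq_zero fun i _ => ?_
    rw [show e'.repr x i = 0 from congrFun hg i, zero_smul]
  -- the key unit: `1 + ωk(aᵢ,aᵢ)·ωk(bᵢ,bᵢ) ≠ 0`
  have hbar : ∀ KK : Fin t,
      (1 : IsLocalRing.ResidueField R) + ωk (d (Sum.inl KK)) (d (Sum.inl KK)) *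
        ωk (d (Sum.inr KK)) (d (Sum.inr KK)) ≠ 0 := by
    intro KK h0
    have hx0 : ωk (ωk (d (Sum.inr KK)) (d (Sum.inr KK)) • d (Sum.inl KK) - d (Sum.inr KK)) = 0 := by
      refine d.ext fun j => ?_
      rw [LinearMap.zero_apply, map_sub, map_smul, LinearMap.sub_apply, LinearMap.smul_apply,
        smul_eq_mul]
      by_cases h1 : j = Sum.inl KK
      · subst h1
        have hba : ωk (d (Sum.inr KK)) (d (Sum.inl KK)) = -1 := by
          rw [hskewk, hd.1 KK]
        rw [hba]
        linear_combination h0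
      · by_cases h2 : j = Sum.inr KK
        · subst h2
          rw [hd.1 KK]
          ring
        · rw [hskewk (d (Sum.inl KK)) (d j), (hdcross KK j h1 h2).1,
            hskewk (d (Sum.inr KK)) (d j), (hdcross KK j h1 h2).2]
          ring
    have hx : ωk (d (Sum.inr KK)) (d (Sum.inr KK)) • d (Sum.inl KK) - d (Sum.inr KK) = 0 :=
      hndk _ (fun y => by rw [hx0]; rfl)
    have h5 := congrArg (fun z => d.repr z (Sum.inr KK)) hx
    simp [Finsupp.single_apply] at h5
  -- the inductive lifting of the symplectic basis
  have key : ∀ k : ℕ, k ≤ t → ∃ v : Fin t ⊕ Fin t → M,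
      (∀ i, ρ (v i) = d i) ∧ v (Sum.inr ⟨0, ht⟩) = B₁ ∧
      (∀ i : Fin t, (i : ℕ) < k →
        ω (v (Sum.inl i)) (v (Sum.inr i)) = 1 ∧
        ∀ j, j ≠ Sum.inl i → j ≠ Sum.inr i →
          ω (v (Sum.inl i)) (v j) = 0 ∧ ω (v (Sum.inr i)) (v j) = 0) := by
    intro k
    induction k with
    | zero =>
      intro _
      refine ⟨Function.update (fun i => (hρsur (d i)).choose) (Sum.inr ⟨0, ht⟩) B₁, ?_, ?_, ?_⟩
      · intro i
        by_cases h : i = Sum.inr ⟨0, ht⟩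
        · subst h
          rw [Function.update_self]
          exact hB₁
        · rw [Function.update_of_ne h]
          exact (hρsur (d i)).choose_spec
      · rw [Function.update_self]
      · intro i hi
        exact absurd hi (Nat.not_lt_zero _)
    | succ k ih =>
      intro hk1
      obtain ⟨v, hvρ, hvB, hvPS⟩ := ih (Nat.le_of_succ_le hk1)
      have hk : k < t := hk1
      set K : Fin t := ⟨k, hk⟩ with hKdef
      -- normalize `A_K`
      obtain ⟨U, hU⟩ := hunit (ω (v (Sum.inl K)) (v (Sum.inr K)))
        (by
          have : IsLocalRing.residue R (ω (v (Sum.inl K)) (v (Sum.inr K))) = 1 := by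
            rw [← hcomp, hvρ, hvρ, hd.1]
          rw [this]
          exact one_ne_zero)
      set A : M := (↑U⁻¹ : R) • v (Sum.inl K) with hAdef
      set B : M := v (Sum.inr K) with hBdef
      have hAB : ω A B = 1 := by
        rw [hAdef, map_smul, LinearMap.smul_apply, smul_eq_mul, ← hU]
        exact U.inv_mul
      have hBA : ω B A = -1 := by
        rw [hskew, hAB]
      have hrU : IsLocalRing.residue R (↑U : R) = 1 := by
        rw [hU, ← hcomp, hvρ, hvρ, hd.1]
      have hriu : IsLocalRing.residue R (↑U⁻¹ : R) = 1 := by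
        have h := congrArg (IsLocalRing.residue R) U.inv_mul
        rw [map_mul, hrU, mul_one, map_one] at h
        exact h
      have hρA : ρ A = d (Sum.inl K) := by
        rw [hAdef, hρsmul, hriu, one_smul, hvρ]
      have hρB : ρ B = d (Sum.inr K) := hvρ (Sum.inr K)
      have hρlin : ∀ (x : M) (r1 r2 : R), ρ (x + r1 • A + r2 • B) =
          ρ x + IsLocalRing.residue R r1 • ρ A + IsLocalRing.residue R r2 • ρ B := by
        intro x r1 r2
        rw [map_add, map_add, hρsmul r1 A, hρsmul r2 B]
      have hωlin : ∀ (x y : M) (r1 r2 : R), ω x (y + r1 • A + r2 • B) =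
          ω x y + r1 * ω x A + r2 * ω x B := by
        intro x y r1 r2
        rw [map_add, map_add, (ω x).map_smul r1 A, (ω x).map_smul r2 B, smul_eq_mul,
          smul_eq_mul]
      -- the unit `1 + s·r`
      obtain ⟨L, hL⟩ := hunit (1 + ω A A * ω B B)
        (by
          have : IsLocalRing.residue R (1 + ω A A * ω B B) =
              1 + ωk (d (Sum.inl K)) (d (Sum.inl K)) * ωk (d (Sum.inr K)) (d (Sum.inr K)) := by
            rw [map_add, map_one, map_mul, ← hcomp, ← hcomp, hρA, hρB]
          rw [this]
          exact hbar K)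
      have hli : (↑L⁻¹ : R) * (1 + ω A A * ω B B) = 1 := by
        rw [← hL]
        exact L.inv_mul
      -- the corrected family
      set v' : Fin t ⊕ Fin t → M := fun j =>
        if j = Sum.inl K then A
        else if j = Sum.inr K then B
        else v j
          + (-(ω (v j) B) - (↑L⁻¹ : R) * (ω B B * (ω (v j) A - ω (v j) B * ω A A))) • A
          + ((↑L⁻¹ : R) * (ω (v j) A - ω (v j) B * ω A A)) • B
        with hv'def
      have hv'l : v' (Sum.inl K) = A := by
        rw [hv'def]
        simp
      have hv'r : v' (Sum.inr K) = B := by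
        rw [hv'def]
        simp
      have hv'j : ∀ j, j ≠ Sum.inl K → j ≠ Sum.inr K → v' j = v j
          + (-(ω (v j) B) - (↑L⁻¹ : R) * (ω B B * (ω (v j) A - ω (v j) B * ω A A))) • A
          + ((↑L⁻¹ : R) * (ω (v j) A - ω (v j) B * ω A A)) • B := by
        intro j h1 h2
        rw [hv'def]
        simp only [if_neg h1, if_neg h2]
      -- orthogonality of the corrected vectors to the `K`-th pair
      have horthA : ∀ j, j ≠ Sum.inl K → j ≠ Sum.inr K → ω (v' j) A = 0 := by
        intro j h1 h2
        rw [hv'j j h1 h2]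
        simp only [map_add, map_smul, LinearMap.add_apply, LinearMap.smul_apply, smul_eq_mul]
        rw [hBA]
        linear_combination (ω (v j) B * ω A A - ω (v j) A) * hli
      have horthB : ∀ j, j ≠ Sum.inl K → j ≠ Sum.inr K → ω (v' j) B = 0 := by
        intro j h1 h2
        rw [hv'j j h1 h2]
        simp only [map_add, map_smul, LinearMap.add_apply, LinearMap.smul_apply, smul_eq_mul]
        rw [hAB]
        ring
      -- the corrected family still reduces to `d`
      have hρv' : ∀ j, ρ (v' j) = d j := by
        intro j
        by_cases h1 : j = Sum.inl K
        · subst h1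
          rw [hv'l, hρA]
        · by_cases h2 : j = Sum.inr K
          · subst h2
            rw [hv'r, hρB]
          · have hα : IsLocalRing.residue R (ω (v j) A) = 0 := by
              rw [← hcomp, hvρ, hρA]
              exact (hdcross K j h1 h2).1
            have hβ : IsLocalRing.residue R (ω (v j) B) = 0 := by
              rw [← hcomp, hvρ, hρB]
              exact (hdcross K j h1 h2).2
            have h3 : IsLocalRing.residue R
                (-(ω (v j) B) - (↑L⁻¹ : R) * (ω B B * (ω (v j) A - ω (v j) B * ω A A))) = 0 := by
              rw [map_sub, map_neg, map_mul, map_mul, map_sub, map_mul, hα, hβ]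
              ring
            have h4 : IsLocalRing.residue R
                ((↑L⁻¹ : R) * (ω (v j) A - ω (v j) B * ω A A)) = 0 := by
              rw [map_mul, map_sub, map_mul, hα, hβ]
              ring
            rw [hv'j j h1 h2, hρlin, hρA, hρB, hvρ, h3, h4,
              zero_smul, zero_smul, add_zero, add_zero]
      -- vectors of earlier pairs are unchanged
      have hfix' : ∀ j, j ≠ Sum.inl K → j ≠ Sum.inr K →
          ω (v j) (v (Sum.inl K)) = 0 → ω (v j) (v (Sum.inr K)) = 0 → v' j = v j := by
        intro j h1 h2 hz1 hz2
        have hα : ω (v j) A = 0 := by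
          rw [hAdef, map_smul, smul_eq_mul, hz1, mul_zero]
        have hβ : ω (v j) B = 0 := by
          rw [hBdef]
          exact hz2
        rw [hv'j j h1 h2, hα, hβ]
        simp
      have hfix : ∀ i0 : Fin t, (i0 : ℕ) < k →
          v' (Sum.inl i0) = v (Sum.inl i0) ∧ v' (Sum.inr i0) = v (Sum.inr i0) := by
        intro i0 hi0
        have hne : K ≠ i0 := by
          intro h
          rw [← h] at hi0
          simp [hKdef] at hi0
        have hne1 : (Sum.inl K : Fin t ⊕ Fin t) ≠ Sum.inl i0 := fun h => hne (Sum.inl.inj h)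
        have hne2 : (Sum.inl K : Fin t ⊕ Fin t) ≠ Sum.inr i0 := by simp
        have hne3 : (Sum.inr K : Fin t ⊕ Fin t) ≠ Sum.inl i0 := by simp
        have hne4 : (Sum.inr K : Fin t ⊕ Fin t) ≠ Sum.inr i0 := fun h => hne (Sum.inr.inj h)
        have hzl := (hvPS i0 hi0).2 (Sum.inl K) hne1 hne2
        have hzr := (hvPS i0 hi0).2 (Sum.inr K) hne3 hne4
        constructor
        · exact hfix' _ (fun h => hne (Sum.inl.inj h).symm) (by simp) hzl.1 hzr.1
        · exact hfix' _ (by simp) (fun h => hne (Sum.inr.inj h).symm) hzl.2 hzr.2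
      refine ⟨v', hρv', ?_, ?_⟩
      · -- `B₁` is preserved
        by_cases h0 : (⟨0, ht⟩ : Fin t) = K
        · rw [h0, hv'r, hBdef, ← h0]
          exact hvB
        · have h0' : 0 < k := by
            rcases Nat.eq_zero_or_pos k with hk0 | hk0
            · exact absurd (by rw [hKdef]; exact Fin.ext (by simp [hk0])) h0
            · exact hk0
          have := hfix ⟨0, ht⟩ h0'
          rw [this.2]
          exact hvB
      · -- the partial symplectic conditions now hold one step further
        intro i hik1
        by_cases hik : (i : ℕ) < k
        · have hfi := hfix i hik
          have hne : K ≠ i := by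
            intro h
            rw [← h] at hik
            simp [hKdef] at hik
          have hne1 : (Sum.inl K : Fin t ⊕ Fin t) ≠ Sum.inl i := fun h => hne (Sum.inl.inj h)
          have hne2 : (Sum.inl K : Fin t ⊕ Fin t) ≠ Sum.inr i := by simp
          have hne3 : (Sum.inr K : Fin t ⊕ Fin t) ≠ Sum.inl i := by simp
          have hne4 : (Sum.inr K : Fin t ⊕ Fin t) ≠ Sum.inr i := fun h => hne (Sum.inr.inj h)
          have hzl := (hvPS i hik).2 (Sum.inl K) hne1 hne2
          have hzr := (hvPS i hik).2 (Sum.inr K) hne3 hne4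
          have hαl : ω (v (Sum.inl i)) A = 0 := by
            rw [hAdef, map_smul, smul_eq_mul, hzl.1, mul_zero]
          have hαr : ω (v (Sum.inr i)) A = 0 := by
            rw [hAdef, map_smul, smul_eq_mul, hzl.2, mul_zero]
          have hβl : ω (v (Sum.inl i)) B = 0 := hzr.1
          have hβr : ω (v (Sum.inr i)) B = 0 := hzr.2
          constructor
          · rw [hfi.1, hfi.2]
            exact (hvPS i hik).1
          · intro j hj1 hj2
            rw [hfi.1, hfi.2]
            by_cases h1 : j = Sum.inl K
            · subst h1
              rw [hv'l]
              exact ⟨hαl, hαr⟩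
            · by_cases h2 : j = Sum.inr K
              · subst h2
                rw [hv'r]
                exact ⟨hβl, hβr⟩
              · have hz := (hvPS i hik).2 j hj1 hj2
                rw [hv'j j h1 h2]
                constructor
                · rw [hωlin, hz.1, hαl, hβl]
                  ring
                · rw [hωlin, hz.2, hαr, hβr]
                  ring
        · have hiK : i = K := by
            have hik2 : (i : ℕ) = k := by omega
            rw [hKdef]
            exact Fin.ext (by simp [hik2])
          subst hiK
          constructor
          · rw [hv'l, hv'r]
            exact hAB
          · intro j hj1 hj2
            constructor
            · rw [hv'l, hskew, horthA j hj1 hj2, neg_zero]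
            · rw [hv'r, hskew, horthB j hj1 hj2, neg_zero]
  -- conclude: at `k = t` we get the full symplectic family, which is a basis
  obtain ⟨v, hvρ, hvB, hvPS⟩ := key t le_rfl
  have hPdet : IsUnit (c'.det v) := by
    apply hunit
    rw [Basis.det_apply, RingHom.map_det]
    have heq : (IsLocalRing.residue R).mapMatrix (c'.toMatrix v) = e'.toMatrix ⇑d := by
      ext i j
      rw [RingHom.mapMatrix_apply, Matrix.map_apply, Basis.toMatrix_apply, Basis.toMatrix_apply,
        hrepr, hvρ]
    rw [heq, ← Basis.det_apply]
    exact (e'.isUnit_det d).ne_zero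
  obtain ⟨hli, hsp⟩ := (Basis.is_basis_iff_det c').mpr hPdet
  refine ⟨Basis.mk hli hsp.ge, ⟨?_, ?_⟩, ?_, ?_⟩
  · intro i
    rw [Basis.mk_apply, Basis.mk_apply]
    exact (hvPS i i.isLt).1
  · intro i j hij
    have h1 : (Sum.inr j : Fin t ⊕ Fin t) ≠ Sum.inl i := by simp
    have h2 : (Sum.inr j : Fin t ⊕ Fin t) ≠ Sum.inr i := fun h => hij (Sum.inr.inj h).symm
    have h3 : (Sum.inl j : Fin t ⊕ Fin t) ≠ Sum.inl i := fun h => hij (Sum.inl.inj h).symm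
    have h4 : (Sum.inl j : Fin t ⊕ Fin t) ≠ Sum.inr i := by simp
    simp only [Basis.mk_apply]
    exact ⟨((hvPS i i.isLt).2 (Sum.inr j) h1 h2).1,
      ((hvPS i i.isLt).2 (Sum.inl j) h3 h4).1,
      ((hvPS i i.isLt).2 (Sum.inr j) h1 h2).2⟩
  · rw [Basis.mk_apply]
    exact hvB
  · intro i
    rw [Basis.mk_apply]
    exact hvρ i
end

section
/- Every invertible skew-symmetric 2t × 2t matrix over a commutative local ring R is congruent (i.e., of the form PᵀAP for an invertible matrix P) to a block-diagonal matrix with t blocks of the form [[*, 1], [-1, *]] on the main diagonal and zeros in all other entries. -/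
open Matrix

section helpers
variable {R : Type*} [CommRing R] {n : Type*} [Fintype n] [DecidableEq n]

/-- congruence of square matrices -/
def MCongr (A B : Matrix n n R) : Prop :=
  ∃ P : Matrix n n R, IsUnit P.det ∧ Pᵀ * A * P = B

lemma MCongr.refl (A : Matrix n n R) : MCongr A A :=
  ⟨1, by simp, by simp⟩

lemma MCongr.trans {A B C : Matrix n n R} (h1 : MCongr A B) (h2 : MCongr B C) :
    MCongr A C := by
  obtain ⟨P, hP, rfl⟩ := h1
  obtain ⟨Q, hQ, rfl⟩ := h2
  exact ⟨P * Q, by simp [hP.mul hQ], by simp [Matrix.transpose_mul, Matrix.mul_assoc]⟩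

lemma MCongr.skew {A B : Matrix n n R} (h : MCongr A B) (hA : Aᵀ = -A) : Bᵀ = -B := by
  obtain ⟨P, hP, rfl⟩ := h
  simp [Matrix.transpose_mul, hA, Matrix.mul_assoc, Matrix.neg_mul, Matrix.mul_neg]

lemma MCongr.isUnit_det {A B : Matrix n n R} (h : MCongr A B) (hA : IsUnit A.det) :
    IsUnit B.det := by
  obtain ⟨P, hP, rfl⟩ := h
  simp only [Matrix.det_mul, Matrix.det_transpose]
  exact (hP.mul hA).mul hP

lemma stdBasisMatrix_transpose' (p q : n) (c : R) :
    (Matrix.single p q c)ᵀ = Matrix.single q p c := by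
  ext a b
  simp [Matrix.single, and_comm]

lemma conj_transvection_apply (A : Matrix n n R) (p q : n) (c : R) (a b : n) :
    ((Matrix.transvection p q c)ᵀ * A * Matrix.transvection p q c) a b =
      A a b + (if b = q then A a p * c else 0) + (if a = q then c * A p b else 0)
        + (if a = q ∧ b = q then c * A p p * c else 0) := by
  have hT : Matrix.transvection p q c = 1 + Matrix.single p q c := rfl
  have e1 : (Matrix.transvection p q c)ᵀ = 1 + Matrix.single q p c := by
    rw [hT, Matrix.transpose_add, Matrix.transpose_one, stdBasisMatrix_transpose']
  rw [e1, hT]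
  have expand : (1 + Matrix.single q p c) * A * (1 + Matrix.single p q c)
      = A + A * Matrix.single p q c + Matrix.single q p c * A
        + Matrix.single q p c * A * Matrix.single p q c := by
    noncomm_ring
  rw [expand]
  have hAE : ∀ a b, (A * Matrix.single p q c) a b
      = if b = q then A a p * c else 0 := by
    intro a b
    by_cases hb : b = q
    · rw [if_pos hb, hb]; exact Matrix.mul_single_apply_same _ _ _ _ _
    · rw [if_neg hb]; exact Matrix.mul_single_apply_of_ne _ _ _ _ _ hb _
  have hEA : ∀ a b, (Matrix.single q p c * A) a b
      = if a = q then c * A p b else 0 := by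
    intro a b
    by_cases ha : a = q
    · rw [if_pos ha, ha]; exact Matrix.single_mul_apply_same _ _ _ _ _
    · rw [if_neg ha]; exact Matrix.single_mul_apply_of_ne _ _ _ _ _ ha _
  have hEAE : ∀ a b, (Matrix.single q p c * A * Matrix.single p q c) a b
      = if a = q ∧ b = q then c * A p p * c else 0 := by
    intro a b
    by_cases hb : b = q
    · have : (Matrix.single q p c * A * Matrix.single p q c) a b
          = (Matrix.single q p c * A) a p * c := by
        rw [hb]; exact Matrix.mul_single_apply_same _ _ _ _ _
      rw [this, hEA]
      by_cases ha : a = q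
      · rw [if_pos ha, if_pos ⟨ha, hb⟩]
      · rw [if_neg ha, if_neg (fun h => ha h.1), zero_mul]
    · rw [if_neg (fun h => hb h.2)]
      exact Matrix.mul_single_apply_of_ne _ _ _ _ _ hb _
  simp only [Matrix.add_apply, hAE, hEA, hEAE]

end helpers
section fieldpart
variable {K : Type*} [Field K]

lemma field_det_zero {n : ℕ} (hn : 2 ≤ n) (M : Matrix (Fin n) (Fin n) K)
    (hskew : Mᵀ = -M)
    (h : ∀ i j, i ≠ j → M i i * M j j + M i j * M i j = 0) : M.det = 0 := by
  have hdiag : ∀ i, M i i + M i i = 0 := by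
    intro i
    have := congrFun (congrFun hskew i) i
    simp only [Matrix.transpose_apply, Matrix.neg_apply] at this
    linear_combination this
  by_cases hd : ∀ i, M i i = 0
  · have hM : M = 0 := by
      ext a b
      by_cases hab : a = b
      · subst hab; simp [hd a]
      · have := h a b hab
        rw [hd a, hd b, zero_mul, zero_add] at this
        simpa using mul_self_eq_zero.mp this
    have : Nonempty (Fin n) := ⟨⟨0, by omega⟩⟩
    rw [hM]
    exact Matrix.det_zero
  · push_neg at hd
    obtain ⟨i0, hi0⟩ := hd
    have h2 : (2 : K) = 0 := by
      have h2' : M i0 i0 * 2 = 0 := by linear_combination hdiag i0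
      rcases mul_eq_zero.mp h2' with h | h
      · exact absurd h hi0
      · exact h
    have aux : ∀ a b, M a b * M a b = M a a * M b b := by
      intro a b
      by_cases hab : a = b
      · subst hab; rfl
      · linear_combination h a b hab - (M a a * M b b) * h2
    have key : ∀ j l, M j l * M i0 i0 = M j i0 * M i0 l := by
      intro j l
      have hsq : (M j l * M i0 i0 - M j i0 * M i0 l) * (M j l * M i0 i0 - M j i0 * M i0 l)
          = 0 := by
        linear_combination (M i0 i0 * M i0 i0) * aux j l + (M i0 l * M i0 l) * aux j i0
          + (M j j * M i0 i0) * aux i0 l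
          + (M j j * M l l * M i0 i0 * M i0 i0 - M j l * M i0 i0 * M j i0 * M i0 l) * h2
      exact sub_eq_zero.mp (mul_self_eq_zero.mp hsq)
    have : Nontrivial (Fin n) := ⟨⟨⟨0, by omega⟩, ⟨1, by omega⟩, by simp [Fin.ext_iff]⟩⟩
    obtain ⟨j, hj⟩ := exists_ne i0
    set c : K := M j i0 * (M i0 i0)⁻¹ with hc
    have hrow : M j = c • M i0 := by
      funext l
      show M j l = c * M i0 l
      rw [hc]
      field_simp
      linear_combination key j l
    have : M = Matrix.updateRow M j (c • M i0) := by
      rw [← hrow, Matrix.updateRow_eq_self]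
    rw [this, Matrix.det_updateRow_smul]
    have : Matrix.updateRow M j (M i0) i0 = Matrix.updateRow M j (M i0) j := by
      rw [Matrix.updateRow_self, Matrix.updateRow_ne (Ne.symm hj)]
    rw [Matrix.det_zero_of_row_eq (Ne.symm hj) this, mul_zero]

end fieldpart
section localpart
variable {R : Type*} [CommRing R] [IsLocalRing R]

lemma exists_minor_unit {n : ℕ} (hn : 2 ≤ n) (A : Matrix (Fin n) (Fin n) R)
    (hskew : Aᵀ = -A) (hdet : IsUnit A.det) :
    ∃ i j : Fin n, i ≠ j ∧ IsUnit (A i i * A j j + A i j * A i j) := by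
  by_contra hcon
  push_neg at hcon
  set φ := IsLocalRing.residue R with hφ
  set M : Matrix (Fin n) (Fin n) (IsLocalRing.ResidueField R) := A.map φ with hM
  have hMskew : Mᵀ = -M := by
    ext a b
    have := congrFun (congrFun hskew a) b
    simp only [Matrix.transpose_apply, Matrix.neg_apply] at this ⊢
    simp only [hM, Matrix.map_apply, this, map_neg]
  have hmin : ∀ i j : Fin n, i ≠ j → M i i * M j j + M i j * M i j = 0 := by
    intro i j hij
    have h1 : A i i * A j j + A i j * A i j ∈ IsLocalRing.maximalIdeal R := hcon i j hij
    have h2 : φ (A i i * A j j + A i j * A i j) = 0 :=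
      (IsLocalRing.residue_eq_zero_iff _).mpr h1
    simp only [map_add, RingHom.map_mul] at h2
    simpa [hM, Matrix.map_apply] using h2
  have hdet0 : M.det = 0 := field_det_zero hn M hMskew hmin
  have : φ A.det = 0 := by rw [RingHom.map_det]; exact hdet0
  exact (hdet.map φ).ne_zero this

lemma step_A {n : ℕ} (hn : 2 ≤ n) (A : Matrix (Fin n) (Fin n) R)
    (hskew : Aᵀ = -A) (hdet : IsUnit A.det) (p q : Fin n) (hpq : p ≠ q) :
    ∃ B : Matrix (Fin n) (Fin n) R, MCongr A B ∧ Bᵀ = -B ∧ B p q = 1 ∧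
      IsUnit (B p p * B q q + 1) := by
  obtain ⟨i, j, hij, hmin⟩ := exists_minor_unit hn A hskew hdet
  -- Stage 1: arrange unit at off-diagonal position (i,j), keeping the minor a unit
  obtain ⟨B1, hc1, hsk1, hij1, hmin1⟩ :
      ∃ B1 : Matrix (Fin n) (Fin n) R, MCongr A B1 ∧ B1ᵀ = -B1 ∧ IsUnit (B1 i j) ∧
        IsUnit (B1 i i * B1 j j + B1 i j * B1 i j) := by
    by_cases hu : IsUnit (A i j)
    · exact ⟨A, MCongr.refl A, hskew, hu, hmin⟩
    · -- A i i is a unit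
      have hAii : IsUnit (A i i) := by
        have hsq : ¬ IsUnit (A i j * A i j) := fun h => hu (isUnit_of_mul_isUnit_left h)
        rcases IsLocalRing.isUnit_or_isUnit_of_isUnit_add hmin with h | h
        · exact isUnit_of_mul_isUnit_left h
        · exact absurd h hsq
      have h2 : A i i + A i i = 0 := by
        have := congrFun (congrFun hskew i) i
        simp only [Matrix.transpose_apply, Matrix.neg_apply] at this
        linear_combination this
      have hji : A j i = -A i j := by
        have := congrFun (congrFun hskew i) j
        simpa [Matrix.transpose_apply, Matrix.neg_apply] using this
      set T := Matrix.transvection i j (1 : R) with hT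
      have hTdet : IsUnit T.det := by
        rw [hT, Matrix.det_transvection_of_ne _ _ hij]; exact isUnit_one
      have e_ij : (Tᵀ * A * T) i j = A i j + A i i * 1 := by
        rw [hT, conj_transvection_apply A i j 1 i j, if_pos rfl, if_neg hij,
          if_neg (fun h => hij h.1), add_zero, add_zero]
      have e_ii : (Tᵀ * A * T) i i = A i i := by
        rw [hT, conj_transvection_apply A i j 1 i i, if_neg hij, if_neg hij,
          if_neg (fun h => hij h.1), add_zero, add_zero, add_zero]
      have e_jj : (Tᵀ * A * T) j j = A j j + A j i * 1 + 1 * A i j + 1 * A i i * 1 := by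
        rw [hT, conj_transvection_apply A i j 1 j j, if_pos rfl, if_pos rfl,
          if_pos ⟨rfl, rfl⟩]
      have hunit_new : IsUnit (A i j + A i i * 1) := by
        rw [mul_one]
        have heq : A i j + A i i = A i i + A i j := by ring
        rw [heq]
        rcases IsLocalRing.isUnit_or_isUnit_of_isUnit_add
            (a := A i i + A i j) (b := -A i j) (by simpa using hAii) with h | h
        · exact h
        · exact absurd (by simpa using h) hu
      refine ⟨Tᵀ * A * T, ⟨T, hTdet, rfl⟩, MCongr.skew ⟨T, hTdet, rfl⟩ hskew, ?_, ?_⟩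
      · rw [e_ij]; exact hunit_new
      · rw [e_ii, e_jj, e_ij]
        have heq : A i i * (A j j + A j i * 1 + 1 * A i j + 1 * A i i * 1)
            + (A i j + A i i * 1) * (A i j + A i i * 1)
            = A i i * A j j + A i j * A i j := by
          rw [hji]; linear_combination (A i i + A i j) * h2
        rw [heq]; exact hmin
  -- Stage 2: permute (i,j) to (p,q)
  have hsk1' : ∀ a b, B1 a b = -B1 b a := by
    intro a b
    have := congrFun (congrFun hsk1 b) a
    simpa [Matrix.transpose_apply, Matrix.neg_apply] using this
  set σ1 := Equiv.swap p i with hσ1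
  set j' := σ1 j with hj'
  have hj'p : j' ≠ p := by
    intro hcon'
    have : σ1 j' = σ1 p := by rw [hcon']
    rw [hj', Equiv.swap_apply_self, hσ1, Equiv.swap_apply_left] at this
    exact hij this.symm
  set σ2 := Equiv.swap q j' with hσ2
  set σ : Equiv.Perm (Fin n) := σ1 * σ2 with hσ
  have hσp : σ p = i := by
    have h2p : σ2 p = p := by
      rw [hσ2, Equiv.swap_apply_of_ne_of_ne hpq (Ne.symm hj'p)]
    rw [hσ, Equiv.Perm.mul_apply, h2p, hσ1, Equiv.swap_apply_left]
  have hσq : σ q = j := by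
    rw [hσ, Equiv.Perm.mul_apply, hσ2, Equiv.swap_apply_left, hj', hσ1,
      Equiv.swap_apply_self]
  set B2 := B1.submatrix σ σ with hB2
  have hc2 : MCongr B1 B2 := by
    refine ⟨(σ⁻¹ : Equiv.Perm (Fin n)).permMatrix R, ?_, ?_⟩
    · rw [Matrix.det_permutation]
      rcases Int.units_eq_one_or (Equiv.Perm.sign σ⁻¹) with h | h <;> rw [h] <;> simp
    · have ht : ((σ⁻¹ : Equiv.Perm (Fin n)).permMatrix R)ᵀ = (σ.permMatrix R) := by
        show ((σ⁻¹ : Equiv.Perm (Fin n)).toPEquiv.toMatrix)ᵀ = _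
        rw [← PEquiv.toMatrix_symm, ← Equiv.toPEquiv_symm]
        rfl
      rw [ht, PEquiv.toMatrix_toPEquiv_mul, PEquiv.mul_toMatrix_toPEquiv,
        Matrix.submatrix_submatrix]
      have hss : Equiv.symm σ⁻¹ = σ := by rw [Equiv.Perm.inv_def, Equiv.symm_symm]
      rw [hss, hB2]
      simp [Function.comp_def]
  have hsk2 : B2ᵀ = -B2 := hc2.skew hsk1
  -- Stage 3: scale column/row q
  obtain ⟨u, hu⟩ := hij1
  set v : R := ((u⁻¹ : Rˣ) : R) with hv
  have huv : B2 p q * v = 1 := by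
    have : B2 p q = B1 i j := by rw [hB2]; simp [Matrix.submatrix_apply, hσp, hσq]
    rw [this, ← hu, hv, Units.mul_inv_eq_one]
  set d : Fin n → R := fun k => if k = q then v else 1 with hd
  set D := Matrix.diagonal d with hD
  have hDdet : IsUnit D.det := by
    rw [hD, Matrix.det_diagonal]
    have : ∏ k, d k = v := by
      rw [hd, Finset.prod_ite_eq' Finset.univ q (fun _ => v)]
      simp
    rw [this, hv]
    exact (u⁻¹ : Rˣ).isUnit
  have hDentry : ∀ a b, (Dᵀ * B2 * D) a b = d a * B2 a b * d b := by
    intro a b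
    rw [hD, Matrix.diagonal_transpose, Matrix.mul_diagonal, Matrix.diagonal_mul]
  have hdp : d p = 1 := if_neg hpq
  have hdq : d q = v := if_pos rfl
  refine ⟨Dᵀ * B2 * D, (hc1.trans hc2).trans ⟨D, hDdet, rfl⟩, ?_, ?_, ?_⟩
  · exact MCongr.skew ⟨D, hDdet, rfl⟩ hsk2
  · rw [hDentry p q, hdp, hdq, one_mul]
    exact huv
  · rw [hDentry p p, hDentry q q, hdp, hdq]
    have hq : B2 p q * B2 p q * (v * v) = 1 := by
      rw [show B2 p q * B2 p q * (v * v) = (B2 p q * v) * (B2 p q * v) by ring, huv, one_mul]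
    have heq : (1:R) * B2 p p * 1 * (v * B2 q q * v) + 1
        = (B2 p p * B2 q q + B2 p q * B2 p q) * (v * v) := by
      linear_combination (-1 : R) * hq
    rw [heq]
    have hmin2 : IsUnit (B2 p p * B2 q q + B2 p q * B2 p q) := by
      have e1 : B2 p p = B1 i i := by rw [hB2]; simp [Matrix.submatrix_apply, hσp]
      have e2 : B2 q q = B1 j j := by rw [hB2]; simp [Matrix.submatrix_apply, hσq]
      have e3 : B2 p q = B1 i j := by rw [hB2]; simp [Matrix.submatrix_apply, hσp, hσq]
      rw [e1, e2, e3]; exact hmin1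
    refine hmin2.mul ?_
    have : v * v = ((u⁻¹ * u⁻¹ : Rˣ) : R) := by rw [hv]; simp
    rw [this]
    exact Units.isUnit _

end localpart
section main
variable {R : Type*} [CommRing R] [IsLocalRing R]

set_option maxHeartbeats 1000000 in
theorem skew_normal : ∀ (t : ℕ) (A : Matrix (Fin (2*t)) (Fin (2*t)) R),
    Aᵀ = -A → IsUnit A.det →
    ∃ P : Matrix (Fin (2*t)) (Fin (2*t)) R, IsUnit P.det ∧
      ∃ c : Fin (2*t) → R,
        Pᵀ * A * P = Matrix.of (fun i j =>
          if i = j then c i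
          else if (i : ℕ) + 1 = (j : ℕ) ∧ (i : ℕ) % 2 = 0 then 1
          else if (j : ℕ) + 1 = (i : ℕ) ∧ (j : ℕ) % 2 = 0 then -1
          else 0) := by
  intro t
  induction t with
  | zero =>
    intro A hskew hdet
    refine ⟨1, by simp, fun _ => 0, ?_⟩
    ext i j
    exact absurd i.isLt (by omega)
  | succ t IH =>
    intro A hskew hdet
    have hn : 2 ≤ 2 * (t+1) := by omega
    set p0 : Fin (2*(t+1)) := ⟨0, by omega⟩ with hp0
    set p1 : Fin (2*(t+1)) := ⟨1, by omega⟩ with hp1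
    have hp01 : p0 ≠ p1 := by
      intro h
      have := congrArg Fin.val h
      rw [hp0, hp1] at this
      exact absurd this (by norm_num)
    obtain ⟨B, hAB, hBskew, hB01, hBmin⟩ := step_A hn A hskew hdet p0 p1 hp01
    have hBdet : IsUnit B.det := hAB.isUnit_det hdet
    have hB10 : B p1 p0 = -1 := by
      have := congrFun (congrFun hBskew p0) p1
      simp only [Matrix.transpose_apply, Matrix.neg_apply] at this
      rw [this, hB01]
    -- pass to sum type
    set e : Fin 2 ⊕ Fin (2*t) ≃ Fin (2*(t+1)) :=
      finSumFinEquiv.trans (finCongr (by omega)) with he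
    have he1 : ∀ x : Fin 2, ((e (Sum.inl x)) : ℕ) = (x : ℕ) := by
      intro x; simp [he]
    have he2 : ∀ x : Fin (2*t), ((e (Sum.inr x)) : ℕ) = 2 + (x : ℕ) := by
      intro x; simp [he]; omega
    have he0p : e (Sum.inl 0) = p0 := by
      apply Fin.ext; rw [he1, hp0]; rfl
    have he1p : e (Sum.inl 1) = p1 := by
      apply Fin.ext; rw [he1, hp1]; rfl
    set Bs := B.submatrix e e with hBs
    have hBsdet : IsUnit Bs.det := by
      rw [hBs, Matrix.det_submatrix_equiv_self]; exact hBdet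
    have hBsskew : Bsᵀ = -Bs := by
      rw [hBs, Matrix.transpose_submatrix, hBskew]
      ext a b
      simp [Matrix.submatrix_apply, Matrix.neg_apply]
    obtain ⟨M, hMdef⟩ : ∃ M', M' = Bs.toBlocks₁₁ := ⟨_, rfl⟩
    obtain ⟨C, hCdef⟩ : ∃ C', C' = Bs.toBlocks₁₂ := ⟨_, rfl⟩
    obtain ⟨D, hDdef⟩ : ∃ D', D' = Bs.toBlocks₂₁ := ⟨_, rfl⟩
    obtain ⟨N, hNdef⟩ : ∃ N'', N'' = Bs.toBlocks₂₂ := ⟨_, rfl⟩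
    have hBsblocks : Bs = Matrix.fromBlocks M C D N := by
      rw [hMdef, hCdef, hDdef, hNdef, Matrix.fromBlocks_toBlocks]
    have hblocks : Matrix.fromBlocks Mᵀ Dᵀ Cᵀ Nᵀ = Matrix.fromBlocks (-M) (-C) (-D) (-N) := by
      rw [← Matrix.fromBlocks_transpose, ← Matrix.fromBlocks_neg, ← hBsblocks, hBsskew]
    have hMskew : Mᵀ = -M := by
      have := congrArg Matrix.toBlocks₁₁ hblocks
      simpa [Matrix.toBlocks_fromBlocks₁₁] using this
    have hNskew : Nᵀ = -N := by
      have := congrArg Matrix.toBlocks₂₂ hblocks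
      simpa [Matrix.toBlocks_fromBlocks₂₂] using this
    have hDC : D = -Cᵀ := by
      have h := congrArg Matrix.toBlocks₁₂ hblocks
      simp only [Matrix.toBlocks_fromBlocks₁₂] at h
      -- h : Dᵀ = -C
      rw [← Matrix.transpose_transpose D, h, Matrix.transpose_neg]
    -- entries of M
    have hMent : ∀ x y : Fin 2, M x y = B (e (Sum.inl x)) (e (Sum.inl y)) := by
      intro x y; rw [hMdef, hBs]; rfl
    have hM01 : M 0 1 = 1 := by rw [hMent, he0p, he1p]; exact hB01
    have hM10 : M 1 0 = -1 := by rw [hMent, he0p, he1p]; exact hB10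
    have hM00 : M 0 0 = B p0 p0 := by rw [hMent, he0p]
    have hM11 : M 1 1 = B p1 p1 := by rw [hMent, he1p]
    have hMdet : IsUnit M.det := by
      rw [Matrix.det_fin_two, hM01, hM10, hM00, hM11,
        show B p0 p0 * B p1 p1 - 1 * (-1) = B p0 p0 * B p1 p1 + 1 by ring]
      exact hBmin
    -- block elimination
    obtain ⟨X, hX⟩ : ∃ X' : Matrix (Fin 2) (Fin (2*t)) R, X' = -(M⁻¹ * C) := ⟨_, rfl⟩
    have hMinvneg : (-M)⁻¹ = -(M⁻¹) := by
      apply Matrix.inv_eq_right_inv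
      rw [Matrix.neg_mul, Matrix.mul_neg, neg_neg, Matrix.mul_nonsing_inv _ hMdet]
    have hMX : M * X + C = 0 := by
      rw [hX, Matrix.mul_neg, Matrix.mul_nonsing_inv_cancel_left _ _ hMdet, neg_add_cancel]
    have hXT : Xᵀ = Cᵀ * M⁻¹ := by
      rw [hX, Matrix.transpose_neg, Matrix.transpose_mul, Matrix.transpose_nonsing_inv,
        hMskew, hMinvneg, Matrix.mul_neg, neg_neg]
    have hXM : Xᵀ * M + D = 0 := by
      rw [hXT, Matrix.nonsing_inv_mul_cancel_right _ _ hMdet, hDC, add_neg_cancel]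
    obtain ⟨N', hN'⟩ : ∃ W : Matrix (Fin (2*t)) (Fin (2*t)) R, W = Xᵀ * C + N := ⟨_, rfl⟩
    obtain ⟨Ps, hPs⟩ : ∃ W : Matrix (Fin 2 ⊕ Fin (2*t)) (Fin 2 ⊕ Fin (2*t)) R,
        W = Matrix.fromBlocks 1 X 0 1 := ⟨_, rfl⟩
    have hPsdet : IsUnit Ps.det := by
      rw [hPs, Matrix.det_fromBlocks_zero₂₁]; simp
    have hconj : Psᵀ * Bs * Ps = Matrix.fromBlocks M 0 0 N' := by
      rw [hPs, hBsblocks, Matrix.fromBlocks_transpose]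
      simp only [Matrix.transpose_one, Matrix.transpose_zero]
      rw [Matrix.fromBlocks_multiply, Matrix.fromBlocks_multiply]
      simp only [Matrix.one_mul, Matrix.mul_one, Matrix.zero_mul, Matrix.mul_zero,
        add_zero, zero_add]
      rw [hMX, hXM, Matrix.zero_mul, zero_add, hN']
    have hN'skew : N'ᵀ = -N' := by
      have h1 : Cᵀ * X = -(Xᵀ * C) := by
        rw [hXT, hX, Matrix.mul_neg, Matrix.mul_assoc]
      rw [hN', Matrix.transpose_add, Matrix.transpose_mul, Matrix.transpose_transpose,
        h1, hNskew, neg_add]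
    have hN'det : IsUnit N'.det := by
      have hu : IsUnit (Psᵀ * Bs * Ps).det := by
        rw [Matrix.det_mul, Matrix.det_mul, Matrix.det_transpose]
        exact (hPsdet.mul hBsdet).mul hPsdet
      rw [hconj, Matrix.det_fromBlocks_zero₂₁] at hu
      exact isUnit_of_mul_isUnit_right hu
    obtain ⟨P', hP'det, c', hP'⟩ := IH N' hN'skew hN'det
    obtain ⟨F, hF⟩ : ∃ W : Matrix (Fin 2 ⊕ Fin (2*t)) (Fin 2 ⊕ Fin (2*t)) R,
        W = Matrix.fromBlocks 1 0 0 P' := ⟨_, rfl⟩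
    obtain ⟨Qs, hQs⟩ : ∃ W, W = Ps * F := ⟨_, rfl⟩
    have hQsdet : IsUnit Qs.det := by
      rw [hQs, Matrix.det_mul, hF, Matrix.det_fromBlocks_zero₂₁]
      exact hPsdet.mul (by simpa using hP'det)
    have hQconj : Qsᵀ * Bs * Qs = Matrix.fromBlocks M 0 0 (P'ᵀ * N' * P') := by
      have h1 : Qsᵀ * Bs * Qs = Fᵀ * (Psᵀ * Bs * Ps) * F := by
        rw [hQs, Matrix.transpose_mul]
        noncomm_ring
      rw [h1, hconj, hF, Matrix.fromBlocks_transpose]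
      simp only [Matrix.transpose_one, Matrix.transpose_zero]
      rw [Matrix.fromBlocks_multiply, Matrix.fromBlocks_multiply]
      simp only [Matrix.one_mul, Matrix.mul_one, Matrix.zero_mul, Matrix.mul_zero,
        add_zero, zero_add]
    -- back to Fin (2*(t+1))
    obtain ⟨Pb, hPbdet, hPbA⟩ := hAB
    obtain ⟨Qr, hQr⟩ : ∃ W : Matrix (Fin (2*(t+1))) (Fin (2*(t+1))) R,
        W = Qs.submatrix e.symm e.symm := ⟨_, rfl⟩
    have hQrdet : IsUnit Qr.det := by
      rw [hQr, Matrix.det_submatrix_equiv_self]; exact hQsdet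
    have hBback : B = Bs.submatrix e.symm e.symm := by
      rw [hBs]; ext a b; simp
    have hQrconj : Qrᵀ * B * Qr = (Qsᵀ * Bs * Qs).submatrix e.symm e.symm := by
      rw [hQr, hBback, Matrix.transpose_submatrix,
        Matrix.submatrix_mul_equiv _ _ _ e.symm _,
        Matrix.submatrix_mul_equiv _ _ _ e.symm _]
    -- the diagonal entries
    obtain ⟨c, hcdef⟩ : ∃ w : Fin (2*(t+1)) → R, w = fun k : Fin (2*(t+1)) =>
        if hk : (k : ℕ) < 2 then (if (k : ℕ) = 0 then B p0 p0 else B p1 p1)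
        else c' ⟨(k : ℕ) - 2, by omega⟩ := ⟨_, rfl⟩
    have hval_p0 : (p0 : ℕ) = 0 := by rw [hp0]
    have hval_p1 : (p1 : ℕ) = 1 := by rw [hp1]
    have hcp0 : c p0 = B p0 p0 := by
      rw [hcdef]; dsimp only; rw [dif_pos (show (p0:ℕ) < 2 by omega), if_pos hval_p0]
    have hcp1 : c p1 = B p1 p1 := by
      rw [hcdef]; dsimp only
      rw [dif_pos (show (p1:ℕ) < 2 by omega), if_neg (show ¬ (p1:ℕ) = 0 by omega)]
    have hcr : ∀ x : Fin (2*t), c (e (Sum.inr x)) = c' x := by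
      intro x
      have hx2 := he2 x
      simp only [hcdef]
      rw [dif_neg (by omega)]
      congr 1
      apply Fin.ext
      show ((e (Sum.inr x)) : ℕ) - 2 = (x : ℕ)
      omega
    refine ⟨Pb * Qr, ?_, c, ?_⟩
    · rw [Matrix.det_mul]; exact hPbdet.mul hQrdet
    · have hstep : (Pb * Qr)ᵀ * A * (Pb * Qr) = Qrᵀ * (Pbᵀ * A * Pb) * Qr := by
        rw [Matrix.transpose_mul]; noncomm_ring
      rw [hstep, hPbA, hQrconj, hQconj, hP']
      -- key pointwise lemma
      have key : ∀ a' b' : Fin 2 ⊕ Fin (2*t),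
          Matrix.fromBlocks M 0 0 (Matrix.of (fun i j =>
            if i = j then c' i
            else if (i : ℕ) + 1 = (j : ℕ) ∧ (i : ℕ) % 2 = 0 then 1
            else if (j : ℕ) + 1 = (i : ℕ) ∧ (j : ℕ) % 2 = 0 then -1
            else 0)) a' b'
          = (Matrix.of (fun i j =>
            if i = j then c i
            else if (i : ℕ) + 1 = (j : ℕ) ∧ (i : ℕ) % 2 = 0 then 1
            else if (j : ℕ) + 1 = (i : ℕ) ∧ (j : ℕ) % 2 = 0 then -1
            else 0) : Matrix (Fin (2*(t+1))) (Fin (2*(t+1))) R) (e a') (e b') := by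
        intro a' b'
        rcases a' with x | x <;> rcases b' with y | y <;>
          simp only [Matrix.fromBlocks_apply₁₁, Matrix.fromBlocks_apply₁₂,
            Matrix.fromBlocks_apply₂₁, Matrix.fromBlocks_apply₂₂, Matrix.of_apply,
            Matrix.zero_apply]
        · -- inl inl
          have hx := x.isLt
          have hy := y.isLt
          have hEq : (e (Sum.inl x) = e (Sum.inl y)) ↔ x = y :=
            ⟨fun h => Sum.inl.inj (e.injective h), fun h => by rw [h]⟩
          rw [he1 x, he1 y]
          by_cases h1 : x = y
          · subst h1
            rw [if_pos (rfl : e (Sum.inl x) = e (Sum.inl x))]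
            rcases (show (x:ℕ) = 0 ∨ (x:ℕ) = 1 by omega) with h0 | h0
            · have hex : e (Sum.inl x) = p0 := Fin.ext (by rw [he1, h0, hval_p0])
              rw [hMent x x, hex, hcp0]
            · have hex : e (Sum.inl x) = p1 := Fin.ext (by rw [he1, h0, hval_p1])
              rw [hMent x x, hex, hcp1]
          · rw [if_neg (fun h => h1 (hEq.mp h))]
            by_cases h2 : (x:ℕ)+1 = (y:ℕ) ∧ (x:ℕ) % 2 = 0
            · rw [if_pos h2]
              have hex : e (Sum.inl x) = p0 := Fin.ext (by rw [he1, hval_p0]; omega)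
              have hey : e (Sum.inl y) = p1 := Fin.ext (by rw [he1, hval_p1]; omega)
              rw [hMent, hex, hey]; exact hB01
            · rw [if_neg h2]
              by_cases h3 : (y:ℕ)+1 = (x:ℕ) ∧ (y:ℕ) % 2 = 0
              · rw [if_pos h3]
                have hex : e (Sum.inl x) = p1 := Fin.ext (by rw [he1, hval_p1]; omega)
                have hey : e (Sum.inl y) = p0 := Fin.ext (by rw [he1, hval_p0]; omega)
                rw [hMent, hex, hey]; exact hB10
              · rw [if_neg h3]
                exfalso
                have hne : (x:ℕ) ≠ (y:ℕ) := fun h => h1 (Fin.ext h)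
                omega
        · -- inl inr
          rw [he1 x, he2 y]
          split_ifs with h1 h2 h3
          · exfalso
            have hv := congrArg Fin.val h1
            rw [he1, he2] at hv
            have hx := x.isLt
            omega
          · exfalso; have hx := x.isLt; omega
          · exfalso; have hx := x.isLt; omega
          · rfl
        · -- inr inl
          rw [he2 x, he1 y]
          split_ifs with h1 h2 h3
          · exfalso
            have hv := congrArg Fin.val h1
            rw [he2, he1] at hv
            have hy := y.isLt
            omega
          · exfalso; have hy := y.isLt; omega
          · exfalso; have hy := y.isLt; omega
          · rfl
        · -- inr inr
          rw [he2 x, he2 y]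
          have hEq : (e (Sum.inr x) = e (Sum.inr y)) ↔ x = y :=
            ⟨fun h => Sum.inr.inj (e.injective h), fun h => by rw [h]⟩
          by_cases h1 : x = y
          · subst h1
            rw [if_pos (rfl : x = x), if_pos (rfl : e (Sum.inr x) = e (Sum.inr x)), hcr x]
          · rw [if_neg h1,
              if_neg (show ¬(e (Sum.inr x) = e (Sum.inr y)) from fun h => h1 (hEq.mp h))]
            by_cases h2 : (x:ℕ)+1 = (y:ℕ) ∧ (x:ℕ) % 2 = 0
            · rw [if_pos h2,
                if_pos (show 2+(x:ℕ)+1 = 2+(y:ℕ) ∧ (2+(x:ℕ)) % 2 = 0 from ⟨by omega, by omega⟩)]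
            · rw [if_neg h2,
                if_neg (show ¬(2+(x:ℕ)+1 = 2+(y:ℕ) ∧ (2+(x:ℕ)) % 2 = 0) from by omega)]
              by_cases h3 : (y:ℕ)+1 = (x:ℕ) ∧ (y:ℕ) % 2 = 0
              · rw [if_pos h3,
                  if_pos (show 2+(y:ℕ)+1 = 2+(x:ℕ) ∧ (2+(y:ℕ)) % 2 = 0 from ⟨by omega, by omega⟩)]
              · rw [if_neg h3,
                  if_neg (show ¬(2+(y:ℕ)+1 = 2+(x:ℕ) ∧ (2+(y:ℕ)) % 2 = 0) from by omega)]
      ext a b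
      rw [Matrix.submatrix_apply]
      have := key (e.symm a) (e.symm b)
      rw [e.apply_symm_apply, e.apply_symm_apply] at this
      exact this

end main

/-- Every invertible skew-symmetric `2t × 2t` matrix over a commutative
local ring is congruent (`PᵀAP` for an invertible `P`) to a block-diagonal matrix with
`t` blocks `[[*, 1], [-1, *]]` on the diagonal and zeros elsewhere. The block at
position `k` occupies the rows/columns `2k, 2k+1`. -/
theorem stmt_6 {R : Type*} [CommRing R] [IsLocalRing R] {t : ℕ}
    (A : Matrix (Fin (2 * t)) (Fin (2 * t)) R)
    (hskew : Aᵀ = -A) (hinv : IsUnit A.det) :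
    ∃ P : Matrix (Fin (2 * t)) (Fin (2 * t)) R, IsUnit P.det ∧
      ∃ c : Fin (2 * t) → R,
        Pᵀ * A * P = Matrix.of (fun i j =>
          if i = j then c i
          else if (i : ℕ) + 1 = (j : ℕ) ∧ (i : ℕ) % 2 = 0 then 1
          else if (j : ℕ) + 1 = (i : ℕ) ∧ (j : ℕ) % 2 = 0 then -1
          else 0) :=
  skew_normal t A hskew hinv
end

section
/- Let G be a pro-p Demushkin group with d(G) > 2, where every closed subgroup of infinite index is a free pro-p group and every open subgroup U satisfies d(U) = (d(G)-2)[G:U] + 2. Then the intersection of any two nontrivial closed normal subgroups of G is nontrivial. -/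
open scoped Pointwise

/-- A profinite group is pro-`p` if every open normal subgroup has `p`-power index. -/
def IsProPGroup (p : ℕ) (G : Type*) [Group G] [TopologicalSpace G] : Prop :=
  ∀ N : Subgroup G, N.Normal → IsOpen (N : Set G) → ∃ k : ℕ, N.index = p ^ k

/-- A pro-`p` group `F` is a free pro-`p` group if it has a generating subset `X`
converging to `1` such that every map from `X` to a pro-`p` group `H` converging to `1`
extends uniquely to a continuous homomorphism `F → H`. -/
def IsFreeProP (p : ℕ) (F : Type*) [Group F] [TopologicalSpace F]
    [IsTopologicalGroup F] : Prop :=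
  ∃ X : Set F, (Subgroup.closure X).topologicalClosure = ⊤ ∧
    ∀ (H : Type) (_ : Group H) (_ : TopologicalSpace H) (_ : IsTopologicalGroup H)
      (_ : CompactSpace H) (_ : TotallyDisconnectedSpace H), IsProPGroup p H →
      ∀ f : X → H, (∀ U ∈ nhds (1 : H), {x : X | f x ∉ U}.Finite) →
        ∃! φ : F →* H, Continuous φ ∧ ∀ x : X, φ (x : F) = f x

/-- Two subgroups `A, B` of a pro-`p` group `G` exhibit `G` as their free pro-`p`
product `G = A ⨿ B` if they topologically generate `G` and every pair of continuous
homomorphisms from `A` and `B` to a pro-`p` group extends uniquely to a continuous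
homomorphism on `G`. -/
def IsFreeProPProduct (p : ℕ) (G : Type*) [Group G] [TopologicalSpace G]
    [IsTopologicalGroup G] (A B : Subgroup G) : Prop :=
  (A ⊔ B).topologicalClosure = ⊤ ∧
  ∀ (H : Type) (_ : Group H) (_ : TopologicalSpace H) (_ : IsTopologicalGroup H)
    (_ : CompactSpace H) (_ : TotallyDisconnectedSpace H), IsProPGroup p H →
    ∀ (f : A →* H) (g : B →* H), Continuous f → Continuous g →
      ∃! φ : G →* H, Continuous φ ∧ (∀ a : A, φ (a : G) = f a) ∧ (∀ b : B, φ (b : G) = g b)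

/-- The minimal number of topological generators of a topological group,
valued in `ℕ∞` (with value `⊤` if the group is not topologically finitely generated). -/
noncomputable def genNum (G : Type*) [Group G] [TopologicalSpace G]
    [IsTopologicalGroup G] : ℕ∞ :=
  ⨅ S : {S : Finset G // (Subgroup.closure (S : Set G)).topologicalClosure = ⊤},
    ((S.1.card : ℕ∞))



section Helpers

theorem t2_of_profinite {G : Type*} [Group G] [TopologicalSpace G] [IsTopologicalGroup G]
    [TotallyDisconnectedSpace G] : T2Space G :=
  IsTopologicalGroup.t2Space_iff_one_closed.mpr (by
    rw [show ({1} : Set G) = connectedComponent (1 : G) from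
      (totallyDisconnectedSpace_iff_connectedComponent_singleton.mp ‹_› 1).symm]
    exact isClosed_connectedComponent)

theorem exists_openNormal_sub {G : Type*} [Group G] [TopologicalSpace G] [IsTopologicalGroup G]
    [CompactSpace G] [TotallyDisconnectedSpace G] {O : Set G} (hO : IsOpen O) (h1 : (1 : G) ∈ O) :
    ∃ N : Subgroup G, N.Normal ∧ IsOpen (N : Set G) ∧ (N : Set G) ⊆ O := by
  haveI : T2Space G := t2_of_profinite
  obtain ⟨W, ⟨h1W, hWclopen⟩, hWO⟩ := (nhds_basis_clopen (1 : G)).mem_iff.mp (hO.mem_nhds h1)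
  obtain ⟨H, hH⟩ := IsTopologicalGroup.exist_openNormalSubgroup_sub_clopen_nhds_of_one hWclopen h1W
  exact ⟨H.toSubgroup, H.isNormal', H.toOpenSubgroup.isOpen, fun x hx => hWO (hH hx)⟩

theorem isProP_closedSubgroup {p : ℕ} (hp : p.Prime) {G : Type*} [Group G] [TopologicalSpace G]
    [IsTopologicalGroup G] [CompactSpace G] [TotallyDisconnectedSpace G]
    (hG : IsProPGroup p G) (Us : Subgroup G) : IsProPGroup p ↥Us := by
  intro N _ hNopen
  obtain ⟨O, hOopen, hOeq⟩ := isOpen_induced_iff.mp hNopen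
  have h1O : (1 : G) ∈ O := by
    have h1N : (1 : ↥Us) ∈ Subtype.val ⁻¹' O := by rw [hOeq]; exact N.one_mem
    simpa using h1N
  obtain ⟨W, hWn, hWopen, hWO⟩ := exists_openNormal_sub hOopen h1O
  have hle : W.comap Us.subtype ≤ N := by
    intro w hw
    have : (w : G) ∈ O := hWO hw
    have : w ∈ Subtype.val ⁻¹' O := this
    rwa [hOeq] at this
  have hdvd1 : N.index ∣ (W.comap Us.subtype).index := Subgroup.index_dvd_of_le hle
  haveI := hWn
  have h2 : (W.comap Us.subtype).index = W.relIndex Us := by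
    rw [Subgroup.index_comap, Subgroup.range_subtype]
  obtain ⟨k, hk⟩ := hG W hWn hWopen
  have hdvd : N.index ∣ p ^ k := by
    rw [← hk]
    exact hdvd1.trans (h2 ▸ Subgroup.relIndex_dvd_index_of_normal W Us)
  obtain ⟨j, _, hj⟩ := (Nat.dvd_prime_pow hp).mp hdvd
  exact ⟨j, hj⟩

end Helpers

structure Heis (p : ℕ) where
  a : ZMod p
  b : ZMod p
  c : ZMod p

namespace Heis
variable {p : ℕ}

@[ext] theorem ext' {x y : Heis p} (ha : x.a = y.a) (hb : x.b = y.b) (hc : x.c = y.c) :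
    x = y := by cases x; cases y; simp_all

instance : Mul (Heis p) := ⟨fun x y => ⟨x.a + y.a, x.b + y.b, x.c + y.c + x.a * y.b⟩⟩
instance : One (Heis p) := ⟨⟨0, 0, 0⟩⟩
instance : Inv (Heis p) := ⟨fun x => ⟨-x.a, -x.b, -x.c + x.a * x.b⟩⟩

@[simp] theorem mul_a (x y : Heis p) : (x * y).a = x.a + y.a := rfl
@[simp] theorem mul_b (x y : Heis p) : (x * y).b = x.b + y.b := rfl
@[simp] theorem mul_c (x y : Heis p) : (x * y).c = x.c + y.c + x.a * y.b := rfl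
@[simp] theorem one_a : (1 : Heis p).a = 0 := rfl
@[simp] theorem one_b : (1 : Heis p).b = 0 := rfl
@[simp] theorem one_c : (1 : Heis p).c = 0 := rfl
@[simp] theorem inv_a (x : Heis p) : x⁻¹.a = -x.a := rfl
@[simp] theorem inv_b (x : Heis p) : x⁻¹.b = -x.b := rfl
@[simp] theorem inv_c (x : Heis p) : x⁻¹.c = -x.c + x.a * x.b := rfl

instance : Group (Heis p) where
  mul_assoc x y z := by ext <;> simp <;> ring
  one_mul x := by ext <;> simp
  mul_one x := by ext <;> simp
  inv_mul_cancel x := by ext <;> simp <;> ring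

def equivProd : Heis p ≃ ZMod p × ZMod p × ZMod p where
  toFun x := (x.a, x.b, x.c)
  invFun t := ⟨t.1, t.2.1, t.2.2⟩
  left_inv x := rfl
  right_inv t := rfl

instance : TopologicalSpace (Heis p) := ⊥
instance : DiscreteTopology (Heis p) := ⟨rfl⟩
instance : IsTopologicalGroup (Heis p) :=
  { continuous_mul := continuous_of_discreteTopology
    continuous_inv := continuous_of_discreteTopology }

theorem finite (hp : p.Prime) : Finite (Heis p) := by
  haveI : NeZero p := ⟨hp.ne_zero⟩
  exact Finite.of_equiv _ equivProd.symm

theorem card (hp : p.Prime) : Nat.card (Heis p) = p ^ 3 := by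
  haveI : NeZero p := ⟨hp.ne_zero⟩
  rw [Nat.card_congr equivProd, Nat.card_prod, Nat.card_prod, Nat.card_zmod]
  ring

theorem isProP (hp : p.Prime) : IsProPGroup p (Heis p) := by
  intro N _ _
  have h := Subgroup.card_mul_index N
  have hdvd : N.index ∣ p ^ 3 := Dvd.intro_left _ (by rw [h, card hp])
  obtain ⟨j, _, hj⟩ := (Nat.dvd_prime_pow hp).mp hdvd
  exact ⟨j, hj⟩

theorem noncomm (hp : p.Prime) :
    (⟨1, 0, 0⟩ * ⟨0, 1, 0⟩ : Heis p) ≠ (⟨0, 1, 0⟩ : Heis p) * ⟨1, 0, 0⟩ := by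
  haveI : Fact p.Prime := ⟨hp⟩
  intro h
  have := congrArg Heis.c h
  simp at this

end Heis
section Key

variable {p : ℕ} {V : Type*} [Group V] [TopologicalSpace V] [IsTopologicalGroup V]
  [CompactSpace V] [TotallyDisconnectedSpace V]

theorem normal_of_comm (hcomm : ∀ x y : V, x * y = y * x) (N : Subgroup V) : N.Normal := by
  refine ⟨fun n hn g => ?_⟩
  have : g * n * g⁻¹ = n := by rw [hcomm g n, mul_assoc, mul_inv_cancel, mul_one]
  rwa [this]

theorem proc_step (hp : p.Prime) (hpro : IsProPGroup p V)
    (hcomm : ∀ x y : V, x * y = y * x) (y c : V)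
    (hcy : c ∈ (Subgroup.zpowers y).topologicalClosure)
    (hcyp : c ∉ (Subgroup.zpowers (y ^ p)).topologicalClosure) :
    y ∈ (Subgroup.zpowers c).topologicalClosure := by
  haveI : T2Space V := t2_of_profinite
  have hnorm := normal_of_comm hcomm
  -- find N₀
  obtain ⟨N₀, hN₀o, hN₀mem⟩ :
      ∃ N₀ : Subgroup V, IsOpen (N₀ : Set V) ∧ c ∉ Subgroup.zpowers (y ^ p) ⊔ N₀ := by
    have hc' : c ∉ closure ((Subgroup.zpowers (y ^ p) : Subgroup V) : Set V) := hcyp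
    rw [mem_closure_iff_nhds] at hc'
    push_neg at hc'
    obtain ⟨t, htn, hte⟩ := hc'
    obtain ⟨t', ht'sub, ht'open, hct'⟩ := mem_nhds_iff.mp htn
    obtain ⟨N₀, hN₀n, hN₀o, hN₀sub⟩ :=
      exists_openNormal_sub (ht'open.preimage (continuous_mul_left c)) (by simpa using hct')
    refine ⟨N₀, hN₀o, fun hmem => ?_⟩
    haveI := hnorm N₀
    have hset : c ∈ (↑(Subgroup.zpowers (y ^ p) ⊔ N₀) : Set V) := hmem
    rw [Subgroup.mul_normal] at hset
    obtain ⟨s, hs, w, hw, hsw⟩ := hset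
    have hsw' : s = c * w⁻¹ := by rw [← hsw, mul_inv_cancel_right]
    have hst' : s ∈ t' := by
      have : w⁻¹ ∈ (N₀ : Set V) := N₀.inv_mem hw
      have := hN₀sub this
      rwa [Set.mem_preimage, ← hsw'] at this
    have : s ∈ t ∩ (Subgroup.zpowers (y ^ p) : Set V) := ⟨ht'sub hst', hs⟩
    rw [hte] at this
    exact this
  -- main step : for any open N, y ∈ zpowers c ⊔ N
  have hmain : ∀ N : Subgroup V, IsOpen (N : Set V) → y ∈ Subgroup.zpowers c ⊔ N := by
    intro N hNo
    have hN'o : IsOpen ((N ⊓ N₀ : Subgroup V) : Set V) := by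
      rw [Subgroup.coe_inf]; exact hNo.inter hN₀o
    set N' : Subgroup V := N ⊓ N₀ with hN'def
    suffices h : y ∈ Subgroup.zpowers c ⊔ N' by
      have hmono : Subgroup.zpowers c ⊔ N' ≤ Subgroup.zpowers c ⊔ N :=
        sup_le_sup_left inf_le_left _
      exact hmono h
    haveI := hnorm N'
    have hmono' : Subgroup.zpowers (y ^ p) ⊔ N' ≤ Subgroup.zpowers (y ^ p) ⊔ N₀ :=
      sup_le_sup_left inf_le_right _
    have hc2 : c ∉ Subgroup.zpowers (y ^ p) ⊔ N' := fun h => hN₀mem (hmono' h)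
    obtain ⟨t, ht⟩ := hpro N' (hnorm N') hN'o
    haveI : N'.FiniteIndex := ⟨by rw [ht]; exact pow_ne_zero _ hp.ne_zero⟩
    set π := QuotientGroup.mk' N' with hπdef
    -- c ∈ zpowers y ⊔ N'
    have hEclosed : IsClosed ((Subgroup.zpowers y ⊔ N' : Subgroup V) : Set V) :=
      Subgroup.isClosed_of_isOpen _ (Subgroup.isOpen_mono le_sup_right hN'o)
    have hcE : c ∈ Subgroup.zpowers y ⊔ N' :=
      Subgroup.topologicalClosure_minimal _ le_sup_left hEclosed hcy
    -- image facts
    have hπc : π c ∈ Subgroup.zpowers (π y) := by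
      have hset : c ∈ (↑(Subgroup.zpowers y ⊔ N') : Set V) := hcE
      rw [Subgroup.mul_normal] at hset
      obtain ⟨s, hs, w, hw, hsw⟩ := hset
      obtain ⟨m, hm⟩ := Subgroup.mem_zpowers_iff.mp hs
      have hw1 : π w = 1 := (QuotientGroup.eq_one_iff w).mpr hw
      have : π c = (π y) ^ m := by
        rw [← hsw, map_mul, hw1, mul_one, ← hm, map_zpow]
      rw [this]
      exact zpow_mem (Subgroup.mem_zpowers _) m
    have hcard : Nat.card (V ⧸ N') = p ^ t := by rw [← ht, Subgroup.index_eq_card]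
    haveI : Finite (V ⧸ N') := Subgroup.finite_quotient_of_finiteIndex
    obtain ⟨m, hmle, hm_ord⟩ := (Nat.dvd_prime_pow hp).mp (hcard ▸ orderOf_dvd_natCard (π y))
    obtain ⟨s, hs⟩ := (Submonoid.mem_powers_iff _ _).mp (mem_powers_iff_mem_zpowers.mpr hπc)
    have hps : ¬ p ∣ s := by
      rintro ⟨u, rfl⟩
      apply hc2
      have hπeq : π ((y ^ p) ^ u) = π c := by rw [← hs, map_pow, map_pow, pow_mul]
      have hπk : π (((y ^ p) ^ u)⁻¹ * c) = 1 := by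
        rw [map_mul, map_inv, hπeq, inv_mul_cancel]
      have hker : ((y ^ p) ^ u)⁻¹ * c ∈ N' := (QuotientGroup.eq_one_iff _).mp hπk
      have := mul_mem
        (Subgroup.mem_sup_left (pow_mem (Subgroup.mem_zpowers (y ^ p)) u))
        (Subgroup.mem_sup_right hker)
      rwa [← mul_assoc, mul_inv_cancel, one_mul] at this
    have hsne : s ≠ 0 := by
      rintro rfl
      rw [pow_zero] at hs
      have : c ∈ N' := by rw [← QuotientGroup.eq_one_iff]; exact hs.symm
      exact hc2 (Subgroup.mem_sup_right this)
    have hordc : orderOf (π c) = p ^ m := by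
      rw [← hs, orderOf_pow' _ hsne, hm_ord,
        Nat.Coprime.gcd_eq_one (Nat.Coprime.pow_left m ((Nat.Prime.coprime_iff_not_dvd hp).mpr hps)),
        Nat.div_one]
    have heq : Subgroup.zpowers (π c) = Subgroup.zpowers (π y) := by
      refine Subgroup.eq_of_le_of_card_ge (Subgroup.zpowers_le.mpr hπc) ?_
      rw [Nat.card_zpowers, Nat.card_zpowers, hordc, hm_ord]
    have hyc : π y ∈ Subgroup.zpowers (π c) := heq ▸ Subgroup.mem_zpowers _
    obtain ⟨r, hr⟩ := (Submonoid.mem_powers_iff _ _).mp (mem_powers_iff_mem_zpowers.mpr hyc)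
    have hπk : π ((c ^ r)⁻¹ * y) = 1 := by
      rw [map_mul, map_inv, map_pow, hr, inv_mul_cancel]
    have hker : (c ^ r)⁻¹ * y ∈ N' := (QuotientGroup.eq_one_iff _).mp hπk
    have := mul_mem
      (Subgroup.mem_sup_left (pow_mem (Subgroup.mem_zpowers c) r))
      (Subgroup.mem_sup_right hker)
    rwa [← mul_assoc, mul_inv_cancel, one_mul] at this
  -- conclude
  have : y ∈ closure ((Subgroup.zpowers c : Subgroup V) : Set V) := by
    rw [mem_closure_iff_nhds]
    intro t htn
    obtain ⟨t', ht'sub, ht'open, hyt'⟩ := mem_nhds_iff.mp htn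
    obtain ⟨N, hNn, hNo, hNsub⟩ :=
      exists_openNormal_sub (ht'open.preimage (continuous_mul_left y)) (by simpa using hyt')
    haveI := hnorm N
    have hset : y ∈ (↑(Subgroup.zpowers c ⊔ N) : Set V) := hmain N hNo
    rw [Subgroup.mul_normal] at hset
    obtain ⟨s, hs, w, hw, hsw⟩ := hset
    have hsw' : s = y * w⁻¹ := by rw [← hsw, mul_inv_cancel_right]
    refine ⟨s, ⟨?_, hs⟩⟩
    apply ht'sub
    have : w⁻¹ ∈ (N : Set V) := N.inv_mem hw
    have := hNsub this
    rwa [Set.mem_preimage, ← hsw'] at this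
  exact this


theorem key_intersect (hp : p.Prime) (hpro : IsProPGroup p V)
    (hcomm : ∀ x y : V, x * y = y * x) (x₀ : V)
    (hgen : (Subgroup.zpowers x₀).topologicalClosure = ⊤)
    (hx₀ : ∀ k : ℕ, x₀ ^ p ^ k ≠ 1)
    (C D : Subgroup V) (hCc : IsClosed (C : Set V)) (hDc : IsClosed (D : Set V))
    (hC : C ≠ ⊥) (hD : D ≠ ⊥) : C ⊓ D ≠ ⊥ := by
  haveI : T2Space V := t2_of_profinite
  have main : ∀ E : Subgroup V, IsClosed (E : Set V) → E ≠ ⊥ → ∃ n, x₀ ^ p ^ n ∈ E := by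
    intro E hEc hEne
    obtain ⟨⟨c, hcE⟩, hcne'⟩ := Subgroup.ne_bot_iff_exists_ne_one.mp hEne
    have hcne : c ≠ 1 := fun h => hcne' (Subtype.ext h)
    have hU0 : c ∈ (Subgroup.zpowers (x₀ ^ p ^ 0)).topologicalClosure := by
      simp only [pow_zero, pow_one]
      rw [hgen]
      exact Subgroup.mem_top c
    have hex : ∃ k, c ∉ (Subgroup.zpowers (x₀ ^ p ^ k)).topologicalClosure := by
      have hopen : IsOpen ({c}ᶜ : Set V) := isClosed_singleton.isOpen_compl
      have h1 : (1 : V) ∈ ({c}ᶜ : Set V) := by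
        simp only [Set.mem_compl_iff, Set.mem_singleton_iff]
        exact fun h => hcne h.symm
      obtain ⟨N, hNn, hNo, hNsub⟩ := exists_openNormal_sub hopen h1
      obtain ⟨t, ht⟩ := hpro N hNn hNo
      haveI := hNn
      have hxN : x₀ ^ p ^ t ∈ N := by
        have := N.pow_index_mem x₀
        rwa [ht] at this
      have hUle : (Subgroup.zpowers (x₀ ^ p ^ t)).topologicalClosure ≤ N :=
        Subgroup.topologicalClosure_minimal _ (Subgroup.zpowers_le.mpr hxN)
          (Subgroup.isClosed_of_isOpen _ hNo)
      exact ⟨t, fun hct => hNsub (hUle hct) rfl⟩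
    classical
    have hspec : c ∉ (Subgroup.zpowers (x₀ ^ p ^ (Nat.find hex))).topologicalClosure :=
      Nat.find_spec hex
    have hk₀ne : Nat.find hex ≠ 0 := by
      intro h
      rw [h] at hspec
      exact hspec hU0
    obtain ⟨n, hn⟩ : ∃ n, Nat.find hex = n + 1 :=
      ⟨Nat.find hex - 1, (Nat.succ_pred_eq_of_pos (Nat.pos_of_ne_zero hk₀ne)).symm⟩
    have hcn : c ∈ (Subgroup.zpowers (x₀ ^ p ^ n)).topologicalClosure := by
      by_contra h
      exact Nat.find_min hex (by omega) h
    have hnot : c ∉ (Subgroup.zpowers ((x₀ ^ p ^ n) ^ p)).topologicalClosure := by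
      have hyp : (x₀ ^ p ^ n) ^ p = x₀ ^ p ^ (n + 1) := by rw [← pow_mul, ← pow_succ]
      rw [hyp, ← hn]
      exact hspec
    have hstep := proc_step hp hpro hcomm (x₀ ^ p ^ n) c hcn hnot
    have hle : (Subgroup.zpowers c).topologicalClosure ≤ E :=
      Subgroup.topologicalClosure_minimal _ (Subgroup.zpowers_le.mpr hcE) hEc
    exact ⟨n, hle hstep⟩
  obtain ⟨n, hn⟩ := main C hCc hC
  obtain ⟨m, hm⟩ := main D hDc hD
  intro hbot
  have hmax : ∀ {E : Subgroup V} {j : ℕ}, x₀ ^ p ^ j ∈ E → x₀ ^ p ^ max n m ∈ E → True := fun _ _ => trivial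
  have h1 : x₀ ^ p ^ max n m ∈ C := by
    have he : x₀ ^ p ^ max n m = (x₀ ^ p ^ n) ^ p ^ (max n m - n) := by
      rw [← pow_mul, ← pow_add, Nat.add_sub_cancel' (le_max_left n m)]
    rw [he]
    exact pow_mem hn _
  have h2 : x₀ ^ p ^ max n m ∈ D := by
    have he : x₀ ^ p ^ max n m = (x₀ ^ p ^ m) ^ p ^ (max n m - m) := by
      rw [← pow_mul, ← pow_add, Nat.add_sub_cancel' (le_max_right n m)]
    rw [he]
    exact pow_mem hm _
  have : x₀ ^ p ^ max n m ∈ C ⊓ D := ⟨h1, h2⟩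
  rw [hbot] at this
  exact hx₀ _ (Subgroup.mem_bot.mp this)

end Key


/-- Let `G` be a pro-`p` Demushkin group with `d(G) > 2`, i.e. a
pro-`p` group in which every closed subgroup of infinite index is free pro-`p` and
every open subgroup `U` satisfies `d(U) = (d(G) - 2)[G : U] + 2`.  Then the
intersection of any two nontrivial closed normal subgroups of `G` is nontrivial. -/
theorem stmt_10 (p : ℕ) (hp : p.Prime)
    {G : Type*} [Group G] [TopologicalSpace G] [IsTopologicalGroup G]
    [CompactSpace G] [TotallyDisconnectedSpace G] (hG : IsProPGroup p G)
    (hd : 2 < genNum G)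
    (hfree : ∀ H : Subgroup G, IsClosed (H : Set G) → H.index = 0 → IsFreeProP p ↥H)
    (hindex : ∀ U : Subgroup G, IsOpen (U : Set G) →
      genNum ↥U = (genNum G - 2) * (U.index : ℕ∞) + 2)
    (A B : Subgroup G) (hAn : A.Normal) (hBn : B.Normal)
    (hAc : IsClosed (A : Set G)) (hBc : IsClosed (B : Set G))
    (hA : A ≠ ⊥) (hB : B ≠ ⊥) :
    A ⊓ B ≠ ⊥ := by
  haveI : T2Space G := t2_of_profinite
  intro hbot
  obtain ⟨⟨a, haA⟩, ha'⟩ := Subgroup.ne_bot_iff_exists_ne_one.mp hA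
  obtain ⟨⟨b, hbB⟩, hb'⟩ := Subgroup.ne_bot_iff_exists_ne_one.mp hB
  have hane : a ≠ 1 := fun h => ha' (Subtype.ext h)
  have hbne : b ≠ 1 := fun h => hb' (Subtype.ext h)
  -- a and b commute
  have hab : a * b = b * a := by
    have hmem1 : a * b * a⁻¹ * b⁻¹ ∈ A := by
      have h2 : b * a⁻¹ * b⁻¹ ∈ A := hAn.conj_mem a⁻¹ (A.inv_mem haA) b
      have he : a * b * a⁻¹ * b⁻¹ = a * (b * a⁻¹ * b⁻¹) := by group
      rw [he]
      exact A.mul_mem haA h2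
    have hmem2 : a * b * a⁻¹ * b⁻¹ ∈ B :=
      B.mul_mem (hBn.conj_mem b hbB a) (B.inv_mem hbB)
    have hmem : a * b * a⁻¹ * b⁻¹ ∈ A ⊓ B := ⟨hmem1, hmem2⟩
    rw [hbot, Subgroup.mem_bot] at hmem
    have he : a * b = (a * b * a⁻¹ * b⁻¹) * (b * a) := by group
    rw [he, hmem, one_mul]
  set K := Subgroup.closure ({a, b} : Set G) with hKdef
  -- K is commutative
  have hgc : ∀ y ∈ K, Commute a y ∧ Commute b y := by
    intro y hy
    refine Subgroup.closure_induction ?_ ?_ ?_ ?_ hy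
    · intro z hz
      simp only [Set.mem_insert_iff, Set.mem_singleton_iff] at hz
      rcases hz with rfl | rfl
      · exact ⟨Commute.refl z, (hab : Commute z b).symm⟩
      · exact ⟨(hab : Commute a z), Commute.refl z⟩
    · exact ⟨Commute.one_right a, Commute.one_right b⟩
    · rintro u v _ _ ⟨h1, h2⟩ ⟨h3, h4⟩
      exact ⟨h1.mul_right h3, h2.mul_right h4⟩
    · rintro u _ ⟨h1, h2⟩
      exact ⟨h1.inv_right, h2.inv_right⟩
  have hKcomm : ∀ x ∈ K, ∀ y ∈ K, Commute x y := by
    intro x hx y hy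
    refine Subgroup.closure_induction ?_ ?_ ?_ ?_ hx
    · intro z hz
      simp only [Set.mem_insert_iff, Set.mem_singleton_iff] at hz
      rcases hz with rfl | rfl
      · exact (hgc y hy).1
      · exact (hgc y hy).2
    · exact Commute.one_left y
    · intro u v _ _ h1 h2
      exact h1.mul_left h2
    · intro u _ h1
      exact h1.inv_left
  set Us := K.topologicalClosure with hUsdef
  have hUsclosed : IsClosed (Us : Set G) := Subgroup.isClosed_topologicalClosure K
  have haUs : a ∈ Us := K.le_topologicalClosure (Subgroup.subset_closure (by simp))
  have hbUs : b ∈ Us := K.le_topologicalClosure (Subgroup.subset_closure (by simp))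
  -- commutativity of the closure
  have hclcomm : ∀ x ∈ closure (K : Set G), ∀ y ∈ closure (K : Set G), x * y = y * x := by
    have step1 : ∀ x ∈ (K : Set G), ∀ y ∈ closure (K : Set G), x * y = y * x := by
      intro x hx y hy
      have hcl : IsClosed {y : G | x * y = y * x} :=
        isClosed_eq (continuous_const.mul continuous_id) (continuous_id.mul continuous_const)
      exact closure_minimal (fun z hz => (hKcomm x hx z hz).eq) hcl hy
    intro x hx y hy
    have hcl : IsClosed {z : G | z * y = y * z} :=
      isClosed_eq (continuous_id.mul continuous_const) (continuous_const.mul continuous_id)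
    exact closure_minimal (fun z hz => step1 z hz y hy) hcl hx
  have hUscomm : ∀ x y : ↥Us, x * y = y * x := by
    intro x y
    have hx : (x : G) ∈ closure (K : Set G) := x.2
    have hy : (y : G) ∈ closure (K : Set G) := y.2
    exact Subtype.ext (hclcomm _ hx _ hy)
  haveI : CompactSpace ↥Us := isCompact_iff_compactSpace.mp hUsclosed.isCompact
  classical
  -- Us has infinite index
  have hidx : Us.index = 0 := by
    by_contra hne
    haveI : Us.FiniteIndex := ⟨hne⟩
    have hUsopen : IsOpen (Us : Set G) := Subgroup.isOpen_of_isClosed_of_finiteIndex Us hUsclosed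
    have h3 := hindex Us hUsopen
    have hgen2 : genNum ↥Us ≤ 2 := by
      set S : Finset ↥Us := {⟨a, haUs⟩, ⟨b, hbUs⟩} with hSdef
      have hmapeq : (Subgroup.closure ((S : Set ↥Us))).map Us.subtype = K := by
        rw [MonoidHom.map_closure]
        congr 1
        rw [hSdef]
        simp [Set.image_insert_eq]
      have hprop : (Subgroup.closure ((S : Set ↥Us))).topologicalClosure = ⊤ := by
        rw [eq_top_iff]
        rintro u -
        have hu : (u : G) ∈ closure (K : Set G) := u.2
        have hset : Subtype.val '' ((Subgroup.closure ((S : Set ↥Us)) : Subgroup ↥Us) : Set ↥Us)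
            = (K : Set G) := by
          rw [← hmapeq, Subgroup.coe_map, Subgroup.coe_subtype]
        show (u : ↥Us) ∈ closure ((Subgroup.closure ((S : Set ↥Us)) : Subgroup ↥Us) : Set ↥Us)
        rw [closure_subtype, hset]
        exact hu
      have hle : genNum ↥Us ≤ (S.card : ℕ∞) := iInf_le (fun S : {S : Finset ↥Us // (Subgroup.closure (S : Set ↥Us)).topologicalClosure = ⊤} =>
        ((S.1.card : ℕ∞))) ⟨S, hprop⟩
      refine hle.trans ?_
      have : S.card ≤ 2 := (Finset.card_insert_le _ _).trans (by simp)
      exact_mod_cast this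
    have h4 : (1 : ℕ∞) ≤ genNum G - 2 := by
      refine ENat.one_le_iff_ne_zero.mpr fun h => ?_
      exact absurd (tsub_eq_zero_iff_le.mp h) (not_le.mpr hd)
    have h5 : (1 : ℕ∞) ≤ (Us.index : ℕ∞) := by
      exact_mod_cast Nat.one_le_iff_ne_zero.mpr hne
    have h6 : (3 : ℕ∞) ≤ genNum ↥Us := by
      rw [h3]
      have hmul : (1 : ℕ∞) ≤ (genNum G - 2) * (Us.index : ℕ∞) := by
        calc (1 : ℕ∞) = 1 * 1 := (one_mul 1).symm
        _ ≤ (genNum G - 2) * (Us.index : ℕ∞) := mul_le_mul' h4 h5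
      calc (3 : ℕ∞) = 1 + 2 := by norm_num
      _ ≤ (genNum G - 2) * (Us.index : ℕ∞) + 2 := add_le_add_left hmul 2
    have := h6.trans hgen2
    norm_num at this
  obtain ⟨X, hXgen, hXuniv⟩ := hfree Us hUsclosed hidx
  by_cases hX2 : ∃ x : ↥Us, x ∈ X ∧ ∃ y : ↥Us, y ∈ X ∧ x ≠ y
  · -- two distinct generators : contradiction with commutativity via Heisenberg group
    obtain ⟨x, hx, y, hy, hxy⟩ := hX2
    haveI : NeZero p := ⟨hp.ne_zero⟩
    haveI : Finite (Heis p) := Heis.finite hp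
    classical
    have hne_xy : (⟨y, hy⟩ : X) ≠ ⟨x, hx⟩ := fun h => hxy (congrArg Subtype.val h).symm
    set f : X → Heis p := fun z =>
      if z = ⟨x, hx⟩ then ⟨1, 0, 0⟩ else if z = ⟨y, hy⟩ then ⟨0, 1, 0⟩ else 1 with hfdef
    have hfin : ∀ U ∈ nhds (1 : Heis p), {z : X | f z ∉ U}.Finite := by
      intro U hU
      have h1U : (1 : Heis p) ∈ U := mem_of_mem_nhds hU
      apply Set.Finite.subset ((Set.finite_singleton (⟨y, hy⟩ : X)).insert ⟨x, hx⟩)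
      intro z hz
      simp only [Set.mem_setOf_eq] at hz
      by_contra hzmem
      simp only [Set.mem_insert_iff, Set.mem_singleton_iff] at hzmem
      push_neg at hzmem
      have hz1 : f z = 1 := by
        rw [hfdef]
        simp only [if_neg hzmem.1, if_neg hzmem.2]
      exact hz (hz1 ▸ h1U)
    obtain ⟨φ, ⟨hφc, hφx⟩, -⟩ := hXuniv (Heis p) inferInstance inferInstance inferInstance
      inferInstance inferInstance (Heis.isProP hp) f hfin
    have e1 : φ x = ⟨1, 0, 0⟩ := by
      have h := hφx ⟨x, hx⟩
      have hfx : f ⟨x, hx⟩ = ⟨1, 0, 0⟩ := by rw [hfdef]; simp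
      rw [hfx] at h
      exact h
    have e2 : φ y = ⟨0, 1, 0⟩ := by
      have h := hφx ⟨y, hy⟩
      have hfy : f ⟨y, hy⟩ = ⟨0, 1, 0⟩ := by
        rw [hfdef]
        simp [hne_xy]
      rw [hfy] at h
      exact h
    have : (⟨1, 0, 0⟩ * ⟨0, 1, 0⟩ : Heis p) = (⟨0, 1, 0⟩ : Heis p) * ⟨1, 0, 0⟩ := by
      rw [← e1, ← e2, ← map_mul, ← map_mul, hUscomm x y]
    exact Heis.noncomm hp this
  · push_neg at hX2
    rcases Set.eq_empty_or_nonempty X with hXe | ⟨x₀, hx₀X⟩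
    · -- X empty : Us is trivial, contradiction with a ≠ 1
      rw [hXe, Subgroup.closure_empty] at hXgen
      have hmem : (⟨a, haUs⟩ : ↥Us) ∈ (⊥ : Subgroup ↥Us).topologicalClosure :=
        hXgen ▸ Subgroup.mem_top _
      have h1 : (⟨a, haUs⟩ : ↥Us) ∈ closure (((⊥ : Subgroup ↥Us) : Set ↥Us)) := hmem
      rw [Subgroup.coe_bot, closure_singleton] at h1
      exact hane (congrArg Subtype.val h1)
    · -- X ⊆ {x₀} : Us is procyclic
      have hXsub : ∀ z ∈ X, z = x₀ := fun z hz => hX2 z hz x₀ hx₀X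
      have hgen' : (Subgroup.zpowers x₀).topologicalClosure = ⊤ := by
        rw [eq_top_iff, ← hXgen]
        have hle : Subgroup.closure X ≤ (Subgroup.zpowers x₀).topologicalClosure := by
          rw [Subgroup.closure_le]
          intro z hz
          rw [hXsub z hz]
          exact Subgroup.le_topologicalClosure _ (Subgroup.mem_zpowers x₀)
        exact Subgroup.topologicalClosure_minimal _ hle
          (Subgroup.isClosed_topologicalClosure _)
      have hpro' : IsProPGroup p ↥Us := isProP_closedSubgroup hp hG Us
      have hx₀pow : ∀ k : ℕ, x₀ ^ p ^ k ≠ (1 : ↥Us) := by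
        intro k hk
        haveI : NeZero (p ^ (k + 1)) := ⟨pow_ne_zero _ hp.ne_zero⟩
        letI tH : TopologicalSpace (Multiplicative (ZMod (p ^ (k + 1)))) := ⊥
        haveI dH : DiscreteTopology (Multiplicative (ZMod (p ^ (k + 1)))) := ⟨rfl⟩
        haveI : IsTopologicalGroup (Multiplicative (ZMod (p ^ (k + 1)))) :=
          { continuous_mul := continuous_of_discreteTopology
            continuous_inv := continuous_of_discreteTopology }
        have hcardH : Nat.card (Multiplicative (ZMod (p ^ (k + 1)))) = p ^ (k + 1) := by
          rw [Nat.card_congr Multiplicative.toAdd, Nat.card_zmod]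
        have hproH : IsProPGroup p (Multiplicative (ZMod (p ^ (k + 1)))) := by
          intro N _ _
          have h := Subgroup.card_mul_index N
          have hdvd : N.index ∣ p ^ (k + 1) := Dvd.intro_left _ (by rw [h, hcardH])
          obtain ⟨j, _, hj⟩ := (Nat.dvd_prime_pow hp).mp hdvd
          exact ⟨j, hj⟩
        set f : X → Multiplicative (ZMod (p ^ (k + 1))) :=
          fun _ => Multiplicative.ofAdd 1 with hfdef
        have hXfin : Finite ↥X :=
          ((Set.finite_singleton x₀).subset fun z hz => hXsub z hz).to_subtype
        have hfin : ∀ U ∈ nhds (1 : Multiplicative (ZMod (p ^ (k + 1)))),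
            {z : X | f z ∉ U}.Finite := fun U _ => Set.toFinite _
        obtain ⟨φ, ⟨hφc, hφx⟩, -⟩ := hXuniv (Multiplicative (ZMod (p ^ (k + 1))))
          inferInstance inferInstance inferInstance inferInstance inferInstance hproH f hfin
        have e1 : φ x₀ = Multiplicative.ofAdd 1 := hφx ⟨x₀, hx₀X⟩
        have hpow1 : (Multiplicative.ofAdd (1 : ZMod (p ^ (k + 1)))) ^ p ^ k = 1 := by
          rw [← e1, ← map_pow, hk, map_one]
        have h2 : ((p ^ k : ℕ) : ZMod (p ^ (k + 1))) = 0 := by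
          have := congrArg Multiplicative.toAdd hpow1
          simpa [toAdd_pow, nsmul_eq_mul] using this
        have hdvd := (ZMod.natCast_eq_zero_iff _ _).mp h2
        have hlt : p ^ k < p ^ (k + 1) := Nat.pow_lt_pow_succ hp.one_lt
        exact absurd (Nat.le_of_dvd (pow_pos hp.pos k) hdvd) (not_le.mpr hlt)
      -- apply the key lemma
      have haC : (⟨a, haUs⟩ : ↥Us) ∈ A.comap Us.subtype := haA
      have hbD : (⟨b, hbUs⟩ : ↥Us) ∈ B.comap Us.subtype := hbB
      have hCc : IsClosed ((A.comap Us.subtype : Subgroup ↥Us) : Set ↥Us) := by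
        rw [Subgroup.coe_comap, Subgroup.coe_subtype]
        exact hAc.preimage continuous_subtype_val
      have hDc : IsClosed ((B.comap Us.subtype : Subgroup ↥Us) : Set ↥Us) := by
        rw [Subgroup.coe_comap, Subgroup.coe_subtype]
        exact hBc.preimage continuous_subtype_val
      have hCne : A.comap Us.subtype ≠ ⊥ := by
        intro h
        rw [h, Subgroup.mem_bot] at haC
        exact hane (congrArg Subtype.val haC)
      have hDne : B.comap Us.subtype ≠ ⊥ := by
        intro h
        rw [h, Subgroup.mem_bot] at hbD
        exact hbne (congrArg Subtype.val hbD)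
      have hkey := key_intersect hp hpro' hUscomm x₀ hgen' hx₀pow
        (A.comap Us.subtype) (B.comap Us.subtype) hCc hDc hCne hDne
      apply hkey
      rw [← Subgroup.comap_inf, hbot, MonoidHom.comap_bot, Subgroup.ker_subtype]
end

section
/- Let p be a prime, G a pro-p Demushkin group with d(G) ≥ 3 (so the index formula d(U) = (d(G)-2)[G:U] + 2 holds for open subgroups U), and let A be a finitely generated closed subgroup and B an open subgroup of G. Then d(A ∩ B) ≤ (d(A) - 1)(d(B) - 2) + 1. -/
open scoped Pointwise

/-- A closed subgroup is topologically finitely generated if some finite subset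
generates a dense subgroup. -/
def TopFG {G : Type*} [Group G] [TopologicalSpace G] [IsTopologicalGroup G]
    (K : Subgroup G) : Prop :=
  ∃ S : Set K, S.Finite ∧ (Subgroup.closure S).topologicalClosure = ⊤

section Aux

lemma schreier_step_abs {D : Type*} [Group D] {p : ℕ} (hp : p.Prime) (S : Finset D)
    (hS : Subgroup.closure (S : Set D) = ⊤) (H : Subgroup D) [hn : H.Normal]
    (hidx : H.index = p) :
    ∃ T : Finset D, ↑T ⊆ (H : Set D) ∧ T.card ≤ p * (S.card - 1) + 1 ∧
      Subgroup.closure (T : Set D) = H := by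
  classical
  set v := QuotientGroup.mk' H with hv
  have hcard : Nat.card (D ⧸ H) = p := by rw [← Subgroup.index_eq_card, hidx]
  haveI : Finite (D ⧸ H) := Nat.finite_of_card_ne_zero (by rw [hcard]; exact hp.pos.ne')
  -- find s0 ∈ S not in H
  obtain ⟨s0, hs0S, hs0H⟩ : ∃ s0 ∈ S, s0 ∉ H := by
    by_contra h
    push_neg at h
    have hSH : Subgroup.closure (S : Set D) ≤ H := (Subgroup.closure_le H).mpr h
    rw [hS, top_le_iff] at hSH
    rw [hSH, Subgroup.index_top] at hidx
    exact hp.one_lt.ne hidx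
  set c : D ⧸ H := v s0 with hc
  have hc1 : c ≠ 1 := by
    simpa [hc, hv, QuotientGroup.eq_one_iff] using hs0H
  have horder : orderOf c = p := by
    rcases hp.eq_one_or_self_of_dvd (orderOf c) (hcard ▸ orderOf_dvd_natCard c) with h | h
    · exact absurd (orderOf_eq_one_iff.mp h) hc1
    · exact h
  have hsurj : ∀ x : D ⧸ H, ∃ e : ℕ, c ^ e = x := by
    intro x
    have htop : Subgroup.zpowers c = ⊤ :=
      Subgroup.eq_top_of_card_eq _ (by rw [Nat.card_zpowers, horder, hcard])
    have hx : x ∈ Subgroup.zpowers c := htop ▸ Subgroup.mem_top x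
    rw [← mem_powers_iff_mem_zpowers] at hx
    obtain ⟨e, he⟩ := hx
    exact ⟨e, he⟩
  choose e0 he0 using hsurj
  set e : D → ℕ := fun d => if d = s0 then 1 else e0 (v d) with he
  have hespec : ∀ s : D, c ^ (e s) = v s := by
    intro s
    by_cases hss : s = s0
    · subst hss; simp [he, pow_one, hc]
    · simp only [he, if_neg hss]; exact he0 (v s)
  set t : ℕ → D → D := fun i s => s0 ^ i * s * (s0 ^ (i + e s))⁻¹ with ht
  have hmemH : ∀ i s, t i s ∈ H := by
    intro i s
    have hvt : v (t i s) = 1 := by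
      simp only [ht, map_mul, map_inv, map_pow, ← hc, ← hespec s, ← pow_add]
      group
    exact (QuotientGroup.eq_one_iff _).mp hvt
  set T : Finset D :=
    insert (s0 ^ p) (((Finset.range p) ×ˢ (S.erase s0)).image fun q => t q.1 q.2) with hT
  set M : Subgroup D := Subgroup.closure (T : Set D) with hM
  have hs0pH : s0 ^ p ∈ H := by
    have : v (s0 ^ p) = 1 := by
      rw [map_pow, ← hc, ← horder, pow_orderOf_eq_one]
    exact (QuotientGroup.eq_one_iff _).mp this
  have hTH : ↑T ⊆ (H : Set D) := by
    intro x hx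
    simp only [hT, Finset.coe_insert, Set.mem_insert_iff, Finset.coe_image,
      Set.mem_image] at hx
    rcases hx with rfl | ⟨q, _, rfl⟩
    · exact hs0pH
    · exact hmemH q.1 q.2
  have hs0pM : s0 ^ p ∈ M := Subgroup.subset_closure (by simp [hT])
  have htM : ∀ k s, s ∈ S → t k s ∈ M := by
    intro k s hsS
    by_cases hss : s = s0
    · have h1 : t k s = 1 := by
        simp only [ht, hss]
        have he1 : e s0 = 1 := by simp [he]
        rw [he1, pow_succ, mul_inv_rev]
        group
      rw [h1]; exact one_mem M
    · have hi : k % p < p := Nat.mod_lt _ hp.pos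
      have hmem : t (k % p) s ∈ M := Subgroup.subset_closure (by
        simp only [hT, Finset.coe_insert, Set.mem_insert_iff, Finset.coe_image, Set.mem_image]
        exact Or.inr ⟨(k % p, s), by
          simp [Finset.mem_product, hi, Finset.mem_erase, hss, hsS], rfl⟩)
      have key : t k s = (s0 ^ p) ^ (k / p) * t (k % p) s * ((s0 ^ p) ^ (k / p))⁻¹ := by
        have hk : k = p * (k / p) + k % p := (Nat.div_add_mod k p).symm
        simp only [ht, ← pow_mul]
        conv_lhs => rw [hk]
        rw [show p * (k / p) + k % p + e s = p * (k / p) + (k % p + e s) by ring]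
        simp only [pow_add, mul_inv_rev]
        group
      rw [key]
      exact mul_mem (mul_mem (pow_mem hs0pM _) hmem) (inv_mem (pow_mem hs0pM _))
  have main : ∀ d, d ∈ Subgroup.closure (S : Set D) → ∃ m ∈ M, ∃ k : ℕ, d = m * s0 ^ k := by
    intro d hd
    induction hd using Subgroup.closure_induction_right with
    | one => exact ⟨1, one_mem M, 0, by simp⟩
    | mul_right x hx s hs ih =>
      obtain ⟨m, hm, k, rfl⟩ := ih
      refine ⟨m * t k s, mul_mem hm (htM k s hs), k + e s, ?_⟩
      simp only [ht]
      group
    | mul_inv_cancel x hx s hs ih =>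
      obtain ⟨m, hm, k, rfl⟩ := ih
      set k' : ℕ := k + p * e s - e s with hk'def
      have hk' : k' + e s = k + p * e s := by
        have : e s ≤ k + p * e s :=
          le_add_left (Nat.le_mul_of_pos_left _ hp.pos)
        omega
      refine ⟨m * ((s0 ^ p) ^ (e s))⁻¹ * (t k' s)⁻¹,
        mul_mem (mul_mem hm (inv_mem (pow_mem hs0pM _))) (inv_mem (htM k' s hs)), k', ?_⟩
      simp only [ht, hk']
      group
  have hMH : M ≤ H := (Subgroup.closure_le H).mpr hTH
  have hHM : H ≤ M := by
    intro h hh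
    obtain ⟨m, hm, k, hk⟩ := main h (by rw [hS]; trivial)
    subst hk
    have hvk : c ^ k = 1 := by
      have h1 : v (m * s0 ^ k) = 1 := (QuotientGroup.eq_one_iff _).mpr hh
      have h2 : v m = 1 := (QuotientGroup.eq_one_iff _).mpr (hMH hm)
      simpa [map_mul, map_pow, h2, ← hc] using h1
    have hpk : p ∣ k := horder ▸ orderOf_dvd_of_pow_eq_one hvk
    obtain ⟨j, rfl⟩ := hpk
    exact mul_mem hm (by rw [pow_mul]; exact pow_mem hs0pM j)
  refine ⟨T, hTH, ?_, le_antisymm hMH hHM⟩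
  calc T.card ≤ (((Finset.range p) ×ˢ (S.erase s0)).image fun q => t q.1 q.2).card + 1 :=
        Finset.card_insert_le _ _
    _ ≤ ((Finset.range p) ×ˢ (S.erase s0)).card + 1 := by
        exact Nat.add_le_add_right (Finset.card_image_le) 1
    _ = p * (S.card - 1) + 1 := by
        rw [Finset.card_product, Finset.card_range, Finset.card_erase_of_mem hs0S]

lemma schreier_step {G : Type*} [Group G] {p : ℕ} (hp : p.Prime)
    (E' E : Subgroup G) (hle : E' ≤ E) (hnorm : ((E'.subgroupOf E)).Normal)
    (hidx : E'.relIndex E = p ∨ E' = E) (S : Finset G) (hSE : ↑S ⊆ (E : Set G))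
    (hcl : Subgroup.closure (S : Set G) = E) :
    ∃ T : Finset G, ↑T ⊆ (E' : Set G) ∧ T.card ≤ p * (S.card - 1) + 1 ∧
      Subgroup.closure (T : Set G) = E' := by
  classical
  rcases hidx with hidx | rfl
  · set Sh : Finset ↥E := S.attach.image (fun x => (⟨x.1, hSE x.2⟩ : ↥E)) with hSh
    have hShcoe : (⇑E.subtype) '' (Sh : Set ↥E) = (S : Set G) := by
      ext x
      constructor
      · rintro ⟨y, hy, rfl⟩
        simp only [hSh, Finset.coe_image, Set.mem_image, Finset.mem_coe] at hy
        obtain ⟨z, -, rfl⟩ := hy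
        exact z.2
      · intro hx
        refine ⟨⟨x, hSE hx⟩, ?_, rfl⟩
        simp only [hSh, Finset.coe_image, Set.mem_image, Finset.mem_coe]
        exact ⟨⟨x, hx⟩, Finset.mem_attach _ _, rfl⟩
    have hShtop : Subgroup.closure (Sh : Set ↥E) = ⊤ := by
      apply Subgroup.map_injective (E.subtype_injective)
      rw [MonoidHom.map_closure, hShcoe, hcl, ← MonoidHom.range_eq_map,
        Subgroup.range_subtype]
    haveI := hnorm
    obtain ⟨Th, hThsub, hThcard, hThcl⟩ :=
      schreier_step_abs hp Sh hShtop (E'.subgroupOf E) hidx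
    refine ⟨Th.image (⇑E.subtype), ?_, ?_, ?_⟩
    · intro x hx
      rw [Finset.coe_image] at hx
      obtain ⟨y, hy, rfl⟩ := hx
      exact Subgroup.mem_subgroupOf.mp (hThsub hy)
    · calc (Th.image (⇑E.subtype)).card ≤ Th.card := Finset.card_image_le
        _ ≤ p * (Sh.card - 1) + 1 := hThcard
        _ ≤ p * (S.card - 1) + 1 := by
            have : Sh.card ≤ S.card := Finset.card_image_le.trans (by rw [Finset.card_attach])
            gcongr
    · rw [Finset.coe_image, ← MonoidHom.map_closure, hThcl,
        Subgroup.subgroupOf_map_subtype, inf_eq_left.mpr hle]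
  · refine ⟨S, hSE, ?_, hcl⟩
    have hp1 : 1 ≤ p := hp.pos
    calc S.card ≤ 1 * (S.card - 1) + 1 := by omega
      _ ≤ p * (S.card - 1) + 1 := by gcongr

lemma pstep {Q : Type*} [Group Q] [Finite Q] {p : ℕ} [hpf : Fact p.Prime]
    (hQ : IsPGroup p Q) {C₀ C : Subgroup Q} (hlt : C₀ < C) :
    ∃ C₁ : Subgroup Q, C₀ ≤ C₁ ∧ C₁ ≤ C ∧ ((C₀.subgroupOf C₁)).Normal ∧
      C₀.relIndex C₁ = p := by
  classical
  set K : Subgroup ↥C := C₀.subgroupOf C with hK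
  have hKlt : K < ⊤ := by
    rcases SetLike.exists_of_lt hlt with ⟨x, hxC, hxC₀⟩
    refine lt_top_iff_ne_top.mpr (fun h => hxC₀ ?_)
    have : (⟨x, hxC⟩ : ↥C) ∈ K := h ▸ Subgroup.mem_top _
    exact Subgroup.mem_subgroupOf.mp this
  haveI : Group.IsNilpotent ↥C := (hQ.to_subgroup C).isNilpotent
  have hnc : NormalizerCondition ↥C := normalizerCondition_of_isNilpotent
  have hKN : K < Subgroup.normalizer (K : Set ↥C) := hnc K hKlt
  set Nz : Subgroup ↥C := Subgroup.normalizer (K : Set ↥C) with hNz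
  set K' : Subgroup ↥Nz := K.subgroupOf Nz with hK'
  haveI hK'n : K'.Normal := Subgroup.normal_in_normalizer
  set W := ↥Nz ⧸ K' with hW
  have hWp : IsPGroup p W := ((hQ.to_subgroup C).to_subgroup Nz).to_quotient K'
  have hWnt : Nontrivial W := by
    rcases SetLike.exists_of_lt hKN with ⟨x, hxNz, hxK⟩
    refine ⟨QuotientGroup.mk' K' ⟨x, hxNz⟩, 1, fun h => hxK ?_⟩
    have : (⟨x, hxNz⟩ : ↥Nz) ∈ K' := (QuotientGroup.eq_one_iff _).mp h
    exact Subgroup.mem_subgroupOf.mp this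
  have hpdvd : p ∣ Nat.card W := by
    obtain ⟨n, hn0, hn⟩ := hWp.nontrivial_iff_card.mp hWnt
    exact hn ▸ dvd_pow_self p hn0.ne'
  haveI : Fintype W := Fintype.ofFinite W
  obtain ⟨x, hx⟩ := exists_prime_orderOf_dvd_card (G := W) p
    (by rwa [← Nat.card_eq_fintype_card])
  set C1' : Subgroup ↥Nz := (Subgroup.zpowers x).comap (QuotientGroup.mk' K') with hC1'
  set C1'' : Subgroup ↥C := C1'.map Nz.subtype with hC1''
  set C₁ : Subgroup Q := C1''.map C.subtype with hC₁
  have hKC1'' : K ≤ C1'' := by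
    intro k hk
    have hkNz : k ∈ Nz := Subgroup.le_normalizer hk
    have hmem : (⟨k, hkNz⟩ : ↥Nz) ∈ K' := Subgroup.mem_subgroupOf.mpr hk
    refine Subgroup.mem_map.mpr ⟨⟨k, hkNz⟩, Subgroup.mem_comap.mpr ?_, rfl⟩
    rw [show (QuotientGroup.mk' K') ⟨k, hkNz⟩ = 1 from (QuotientGroup.eq_one_iff _).mpr hmem]
    exact one_mem _
  have hC₀C₁ : C₀ ≤ C₁ := by
    intro c hc
    exact ⟨⟨c, hlt.le hc⟩, hKC1'' (Subgroup.mem_subgroupOf.mpr hc), rfl⟩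
  have hC₁C : C₁ ≤ C := Subgroup.map_subtype_le _
  have hsub : C₁.subgroupOf C = C1'' :=
    Subgroup.comap_map_eq_self_of_injective C.subtype_injective _
  have hrel : C₀.relIndex C₁ = p := by
    have h1 : K'.relIndex C1' = p := by
      have hker : K' = ((QuotientGroup.mk' K')).ker := (QuotientGroup.ker_mk' K').symm
      rw [hker, ← MonoidHom.comap_bot, Subgroup.relIndex_comap, hC1',
        Subgroup.map_comap_eq_self_of_surjective (QuotientGroup.mk'_surjective K'),
        Subgroup.relIndex_bot_left, Nat.card_zpowers, hx]
    have h2 : K.relIndex C1'' = p := by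
      have hKmap : K'.map Nz.subtype = K := by
        rw [hK', Subgroup.subgroupOf_map_subtype,
          inf_eq_left.mpr (hNz ▸ Subgroup.le_normalizer)]
      have hcm : Subgroup.comap Nz.subtype (K'.map Nz.subtype) = K' :=
        Subgroup.comap_map_eq_self_of_injective Nz.subtype_injective _
      have h3 := Subgroup.relIndex_comap (H := K'.map Nz.subtype) Nz.subtype C1'
      rw [hcm, h1] at h3
      rw [hC1'', ← hKmap, ← h3]
    rw [← Subgroup.relIndex_subgroupOf hC₁C, hsub, ← hK, h2]
  refine ⟨C₁, hC₀C₁, hC₁C, ?_, hrel⟩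
  constructor
  intro n hn g
  have hn' : (n : Q) ∈ C₀ := Subgroup.mem_subgroupOf.mp hn
  obtain ⟨w, hw, hweq⟩ : ∃ w : ↥Nz, w ∈ C1' ∧ ((w : ↥C) : Q) = (g : Q) := by
    have hg : (g : Q) ∈ (C1'.map Nz.subtype).map C.subtype := g.2
    obtain ⟨y, hy, hyeq⟩ := Subgroup.mem_map.mp hg
    obtain ⟨w, hw, hweq⟩ := Subgroup.mem_map.mp hy
    exact ⟨w, hw, by rw [← hyeq, ← hweq]; rfl⟩
  set a : ↥C := ⟨(n : Q), hC₁C n.2⟩ with ha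
  have haK : a ∈ K := Subgroup.mem_subgroupOf.mpr hn'
  have hb : ((w : ↥C)) * a * ((w : ↥C))⁻¹ ∈ K :=
    ((Subgroup.mem_normalizer_iff.mp w.2) a).mp haK
  have hbC₀ : (((w : ↥C)) * a * ((w : ↥C))⁻¹ : ↥C).val ∈ C₀ := Subgroup.mem_subgroupOf.mp hb
  refine Subgroup.mem_subgroupOf.mpr ?_
  have hcoe : ((g * n * g⁻¹ : ↥C₁) : Q) = (((w : ↥C)) * a * ((w : ↥C))⁻¹ : ↥C).val := by
    push_cast
    rw [hweq]
  exact hcoe ▸ hbC₀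



lemma pullback_facts {G Q : Type*} [Group G] [Group Q] {p : ℕ} (hp : p.Prime)
    (π : G →* Q) (D : Subgroup G) {C₀ C₁ : Subgroup Q} (hle : C₀ ≤ C₁)
    (hnorm : ((C₀.subgroupOf C₁)).Normal) (hrel : C₀.relIndex C₁ = p) :
    (D ⊓ Subgroup.comap π C₀) ≤ (D ⊓ Subgroup.comap π C₁) ∧
    (((D ⊓ Subgroup.comap π C₀).subgroupOf (D ⊓ Subgroup.comap π C₁))).Normal ∧
    ((D ⊓ Subgroup.comap π C₀).relIndex (D ⊓ Subgroup.comap π C₁) = p ∨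
      (D ⊓ Subgroup.comap π C₀) = (D ⊓ Subgroup.comap π C₁)) := by
  set E₀ := D ⊓ Subgroup.comap π C₀ with hE₀
  set E₁ := D ⊓ Subgroup.comap π C₁ with hE₁
  have hE : E₀ ≤ E₁ := inf_le_inf_left D (Subgroup.comap_mono hle)
  set ρ : ↥E₁ →* Q := π.comp E₁.subtype with hρ
  have hrange : ∀ y : ↥E₁, ρ y ∈ C₁ := fun y => y.2.2
  have hcomap : E₀.subgroupOf E₁ = Subgroup.comap ρ C₀ := by
    ext x
    simp only [Subgroup.mem_subgroupOf, hE₀, Subgroup.mem_inf, Subgroup.mem_comap]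
    have hD : (x : G) ∈ D := x.2.1
    constructor
    · rintro ⟨-, h⟩; exact h
    · intro h; exact ⟨hD, h⟩
  have hnorm' : ((E₀.subgroupOf E₁)).Normal := by
    rw [hcomap]
    constructor
    intro a ha g
    rw [Subgroup.mem_comap] at ha ⊢
    have h1 : (⟨ρ a, hrange a⟩ : ↥C₁) ∈ C₀.subgroupOf C₁ := Subgroup.mem_subgroupOf.mpr ha
    have h2 := hnorm.conj_mem _ h1 ⟨ρ g, hrange g⟩
    have h3 := Subgroup.mem_subgroupOf.mp h2
    simpa [map_mul, map_inv] using h3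
  refine ⟨hE, hnorm', ?_⟩
  have hdvd : (E₀.subgroupOf E₁).index ∣ p := by
    rw [hcomap, Subgroup.index_comap]
    have hrle : ρ.range ≤ C₁ := by
      rintro - ⟨y, rfl⟩; exact hrange y
    haveI := hnorm
    have := Subgroup.relIndex_dvd_index_of_normal (H := C₀.subgroupOf C₁)
      (K := ρ.range.subgroupOf C₁)
    rw [Subgroup.relIndex_subgroupOf hrle] at this
    have hidx' : (C₀.subgroupOf C₁).index = p := hrel
    rwa [hidx'] at this
  rcases (Nat.Prime.eq_one_or_self_of_dvd hp _ hdvd) with h1 | hp'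
  · right
    have : E₀.subgroupOf E₁ = ⊤ := Subgroup.index_eq_one.mp h1
    exact le_antisymm hE ((Subgroup.subgroupOf_eq_top).mp this)
  · left; exact hp'

lemma core_induct {G Q : Type*} [Group G] [Group Q] [Finite Q] {p : ℕ} [hpf : Fact p.Prime]
    (hQ : IsPGroup p Q) (π : G →* Q) (D : Subgroup G) :
    ∀ n (C₀ C : Subgroup Q), C₀.relIndex C = n → C₀ ≤ C →
    ∀ S : Finset G, ↑S ⊆ ((D ⊓ Subgroup.comap π C : Subgroup G) : Set G) →
      Subgroup.closure (S : Set G) = D ⊓ Subgroup.comap π C →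
    ∃ T : Finset G, ↑T ⊆ ((D ⊓ Subgroup.comap π C₀ : Subgroup G) : Set G) ∧
      T.card ≤ n * (S.card - 1) + 1 ∧
      Subgroup.closure (T : Set G) = D ⊓ Subgroup.comap π C₀ := by
  intro n
  induction n using Nat.strong_induction_on with
  | _ n IH =>
    intro C₀ C hn hle S hSsub hScl
    by_cases heq : C₀ = C
    · subst heq
      rw [Subgroup.relIndex_self] at hn
      subst hn
      refine ⟨S, hSsub, by omega, hScl⟩
    · have hlt : C₀ < C := lt_of_le_of_ne hle heq
      obtain ⟨C₁, h01, h1C, hnorm1, hrel1⟩ := pstep hQ hlt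
      set m := C₁.relIndex C with hm
      have hmn : n = p * m := by
        rw [← hn, ← Subgroup.relIndex_mul_relIndex C₀ C₁ C h01 h1C, hrel1]
      have hm0 : m ≠ 0 := by
        rw [hm]
        exact Subgroup.index_ne_zero_of_finite
      have hmlt : m < n := by
        rw [hmn]
        exact (lt_mul_iff_one_lt_left (Nat.pos_of_ne_zero hm0)).mpr hpf.out.one_lt
      obtain ⟨T₁, hT₁sub, hT₁card, hT₁cl⟩ := IH m hmlt C₁ C rfl h1C S hSsub hScl
      obtain ⟨hE, hnormE, hidxE⟩ := pullback_facts hpf.out π D h01 hnorm1 hrel1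
      obtain ⟨T, hTsub, hTcard, hTcl⟩ :=
        schreier_step hpf.out _ _ hE hnormE hidxE T₁ hT₁sub hT₁cl
      refine ⟨T, hTsub, ?_, hTcl⟩
      calc T.card ≤ p * (T₁.card - 1) + 1 := hTcard
        _ ≤ p * (m * (S.card - 1)) + 1 := by
            have : T₁.card - 1 ≤ m * (S.card - 1) := by omega
            exact Nat.add_le_add_right (Nat.mul_le_mul_left p this) 1
        _ = n * (S.card - 1) + 1 := by rw [hmn, Nat.mul_assoc]

lemma core {G : Type*} [Group G] {p : ℕ} (hp : p.Prime) (B N : Subgroup G) [hNn : N.Normal]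
    (hNB : N ≤ B) {m : ℕ} (hNidx : N.index = p ^ m) (hBidx : B.index ≠ 0)
    (D : Subgroup G) (S : Finset G) (hSD : ↑S ⊆ (D : Set G))
    (hS : Subgroup.closure (S : Set G) = D) :
    ∃ T : Finset G, ↑T ⊆ ((D ⊓ B : Subgroup G) : Set G) ∧
      T.card ≤ B.index * (S.card - 1) + 1 ∧
      Subgroup.closure (T : Set G) = D ⊓ B := by
  haveI : Fact p.Prime := ⟨hp⟩
  set π := QuotientGroup.mk' N with hπ
  haveI : Finite (G ⧸ N) := Nat.finite_of_card_ne_zero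
    (by rw [← Subgroup.index_eq_card, hNidx]; exact pow_ne_zero m hp.pos.ne')
  have hQ : IsPGroup p (G ⧸ N) := IsPGroup.of_card
    (by rw [← Subgroup.index_eq_card, hNidx])
  have hker : π.ker = N := QuotientGroup.ker_mk' N
  have hC : D ⊓ Subgroup.comap π (Subgroup.map π D) = D := by
    rw [Subgroup.comap_map_eq, hker, inf_eq_left]
    exact le_sup_left
  have hC₀ : D ⊓ Subgroup.comap π (Subgroup.map π D ⊓ Subgroup.map π B) = D ⊓ B := by
    rw [Subgroup.comap_inf, Subgroup.comap_map_eq, Subgroup.comap_map_eq, hker,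
      sup_eq_left.mpr hNB, ← inf_assoc, inf_eq_left.mpr (le_sup_left : D ≤ D ⊔ N)]
  have hle : Subgroup.map π D ⊓ Subgroup.map π B ≤ Subgroup.map π D := inf_le_left
  obtain ⟨T, hTsub, hTcard, hTcl⟩ := core_induct hQ π D _ _ _ rfl hle S
    (by rw [hC]; exact hSD) (by rw [hC]; exact hS)
  rw [hC₀] at hTsub hTcl
  refine ⟨T, hTsub, ?_, hTcl⟩
  have hBmap : (Subgroup.map π B).index = B.index := by
    have h1 : Subgroup.comap π (Subgroup.map π B) = B := by
      rw [Subgroup.comap_map_eq, hker, sup_eq_left.mpr hNB]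
    have h2 : (Subgroup.comap π (Subgroup.map π B)).index = (Subgroup.map π B).index := by
      rw [Subgroup.index_comap, MonoidHom.range_eq_top_of_surjective _
        (QuotientGroup.mk'_surjective N), Subgroup.relIndex_top_right]
    rw [← h2, h1]
  have hrel_le : (Subgroup.map π D ⊓ Subgroup.map π B).relIndex (Subgroup.map π D) ≤ B.index := by
    rw [Subgroup.inf_relIndex_left]
    have h2 : (Subgroup.map π B).relIndex (Subgroup.map π D) ≤
        (Subgroup.map π B).relIndex ⊤ := by
      apply Subgroup.relIndex_le_of_le_right le_top
      rw [Subgroup.relIndex_top_right, hBmap]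
      exact hBidx
    rwa [Subgroup.relIndex_top_right, hBmap] at h2
  calc T.card ≤ (Subgroup.map π D ⊓ Subgroup.map π B).relIndex (Subgroup.map π D)
        * (S.card - 1) + 1 := hTcard
    _ ≤ B.index * (S.card - 1) + 1 := by gcongr

lemma genNum_le_of_dense {G : Type*} [Group G] [TopologicalSpace G] [IsTopologicalGroup G]
    (K : Subgroup G) (T : Finset G) (hsub : ↑T ⊆ (K : Set G))
    (hdense : (K : Set G) ⊆
      _root_.closure ((Subgroup.closure (T : Set G) : Subgroup G) : Set G)) :
    genNum ↥K ≤ (T.card : ℕ∞) := by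
  classical
  set T' : Finset ↥K := T.attach.image (fun x => (⟨x.1, hsub x.2⟩ : ↥K)) with hT'
  have hT'coe : (Subtype.val '' (T' : Set ↥K)) = (T : Set G) := by
    ext x
    constructor
    · rintro ⟨y, hy, rfl⟩
      simp only [hT', Finset.coe_image, Set.mem_image, Finset.mem_coe] at hy
      obtain ⟨z, -, rfl⟩ := hy
      exact z.2
    · intro hx
      refine ⟨⟨x, hsub hx⟩, ?_, rfl⟩
      simp only [hT', Finset.coe_image, Set.mem_image, Finset.mem_coe]
      exact ⟨⟨x, hx⟩, Finset.mem_attach _ _, rfl⟩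
  have htop : (Subgroup.closure ((T' : Finset ↥K) : Set ↥K)).topologicalClosure = ⊤ := by
    rw [eq_top_iff]
    rintro x -
    have hx : (x : G) ∈ _root_.closure
        (Subtype.val '' ((Subgroup.closure ((T' : Finset ↥K) : Set ↥K)) : Set ↥K)) := by
      have himg : Subtype.val '' ((Subgroup.closure ((T' : Finset ↥K) : Set ↥K)) : Set ↥K)
          = ((Subgroup.closure (T : Set G) : Subgroup G) : Set G) := by
        rw [← Subgroup.coe_subtype, ← Subgroup.coe_map, MonoidHom.map_closure,
          Subgroup.coe_subtype, hT'coe]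
      rw [himg]
      exact hdense x.2
    have : x ∈ _root_.closure ((Subgroup.closure ((T' : Finset ↥K) : Set ↥K) : Subgroup ↥K)
        : Set ↥K) := by
      rw [closure_subtype]
      exact hx
    exact this
  calc genNum ↥K ≤ (T'.card : ℕ∞) := iInf_le (fun S : {S : Finset ↥K // (Subgroup.closure (S : Set ↥K)).topologicalClosure = ⊤} => ((S.1.card : ℕ∞))) ⟨T', htop⟩
    _ ≤ (T.card : ℕ∞) := by
      have : T'.card ≤ T.card := Finset.card_image_le.trans (by rw [Finset.card_attach])
      exact_mod_cast this

end Aux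

/-- Let `G` be a pro-`p` Demushkin group with `d(G) ≥ 3` (so that the
index formula `d(U) = (d(G) - 2)[G : U] + 2` holds for open subgroups `U`).  If `A`
is a finitely generated closed subgroup and `B` an open subgroup of `G`, then
`d(A ∩ B) ≤ (d(A) - 1)(d(B) - 2) + 1`. -/
theorem stmt_14 (p : ℕ) (hp : p.Prime)
    {G : Type*} [Group G] [TopologicalSpace G] [IsTopologicalGroup G]
    [CompactSpace G] [TotallyDisconnectedSpace G] (hG : IsProPGroup p G)
    (hd : 3 ≤ genNum G)
    (hindex : ∀ U : Subgroup G, IsOpen (U : Set G) →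
      genNum ↥U = (genNum G - 2) * (U.index : ℕ∞) + 2)
    (A B : Subgroup G) (hAc : IsClosed (A : Set G)) (hAfg : TopFG A)
    (hBo : IsOpen (B : Set G)) :
    genNum ↥(A ⊓ B) ≤ (genNum ↥A - 1) * (genNum ↥B - 2) + 1 := by
  classical
  haveI : Fact p.Prime := ⟨hp⟩
  haveI hBfin : Finite (G ⧸ B) := Subgroup.quotient_finite_of_isOpen B hBo
  have hBidx : B.index ≠ 0 := Subgroup.index_ne_zero_of_finite
  -- an open normal subgroup inside B
  obtain ⟨Hn, hHnB⟩ := IsTopologicalGroup.exist_openNormalSubgroup_sub_clopen_nhds_of_one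
    ⟨Subgroup.isClosed_of_isOpen B hBo, hBo⟩ B.one_mem
  set N : Subgroup G := Hn.toSubgroup with hN
  have hNopen : IsOpen (N : Set G) := Hn.isOpen
  haveI hNnormal : N.Normal := Hn.isNormal'
  have hNB : N ≤ B := fun x hx => hHnB hx
  obtain ⟨m, hNidx⟩ := hG N hNnormal hNopen
  -- a finite topological generating set of A of size genNum A
  have hAne : genNum ↥A ≠ ⊤ := by
    obtain ⟨S₀, hfin, hcl⟩ := hAfg
    have h1 : (Subgroup.closure ((hfin.toFinset : Finset ↥A) : Set ↥A)).topologicalClosure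
        = ⊤ := by rwa [Set.Finite.coe_toFinset]
    have h2 : genNum ↥A ≤ ((hfin.toFinset.card : ℕ) : ℕ∞) := iInf_le (fun S : {S : Finset ↥A // (Subgroup.closure (S : Set ↥A)).topologicalClosure = ⊤} => ((S.1.card : ℕ∞))) ⟨hfin.toFinset, h1⟩
    exact ne_top_of_le_ne_top (by simp) h2
  set nA : ℕ := (genNum ↥A).toNat with hnAdef
  have hnA : ((nA : ℕ) : ℕ∞) = genNum ↥A := ENat.coe_toNat hAne
  have hlt : genNum ↥A < ((nA + 1 : ℕ) : ℕ∞) := by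
    rw [← hnA]
    exact_mod_cast Nat.lt_succ_self nA
  rw [genNum] at hlt
  obtain ⟨⟨S, hStop⟩, hSlt⟩ := iInf_lt_iff.mp hlt
  have hScard : S.card ≤ nA := Nat.lt_succ_iff.mp (by exact_mod_cast hSlt)
  -- the dense finitely generated subgroup D ≤ A
  set Sg : Finset G := S.image (⇑A.subtype) with hSg
  set D : Subgroup G := Subgroup.closure (Sg : Set G) with hD
  have hSgA : ↑Sg ⊆ (A : Set G) := by
    intro x hx
    rw [hSg, Finset.coe_image] at hx
    obtain ⟨y, -, rfl⟩ := hx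
    exact y.2
  have hDA : D ≤ A := (Subgroup.closure_le A).mpr hSgA
  have hAD : (A : Set G) ⊆ _root_.closure (D : Set G) := by
    intro a ha
    have hx : (⟨a, ha⟩ : ↥A) ∈
        (Subgroup.closure (S : Set ↥A)).topologicalClosure := hStop ▸ Subgroup.mem_top _
    have hx' : (⟨a, ha⟩ : ↥A) ∈ _root_.closure
        ((Subgroup.closure (S : Set ↥A) : Subgroup ↥A) : Set ↥A) := hx
    rw [closure_subtype] at hx'
    have himg : (Subtype.val '' ((Subgroup.closure (S : Set ↥A) : Subgroup ↥A) : Set ↥A))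
        = (D : Set G) := by
      rw [← Subgroup.coe_subtype, ← Subgroup.coe_map, MonoidHom.map_closure,
        hD, hSg, Finset.coe_image, Subgroup.coe_subtype]
    rw [himg] at hx'
    exact hx'
  -- apply the abstract core result
  obtain ⟨T, hTsub, hTcard, hTcl⟩ := core hp B N hNB hNidx hBidx D Sg
    (by rw [hD]; exact Subgroup.subset_closure) hD.symm
  -- density of D ⊓ B in A ⊓ B
  have hdense : ((A ⊓ B : Subgroup G) : Set G) ⊆
      _root_.closure ((D ⊓ B : Subgroup G) : Set G) := by
    intro x hx
    rw [Subgroup.coe_inf] at hx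
    rw [mem_closure_iff]
    intro o ho hxo
    obtain ⟨d, ⟨hdo, hdB⟩, hdD⟩ := mem_closure_iff.mp (hAD hx.1) (o ∩ ↑B)
      (ho.inter hBo) ⟨hxo, hx.2⟩
    exact ⟨d, hdo, by rw [Subgroup.coe_inf]; exact ⟨hdD, hdB⟩⟩
  have hsub2 : ↑T ⊆ ((A ⊓ B : Subgroup G) : Set G) := by
    intro x hx
    have h1 := hTsub hx
    rw [Subgroup.coe_inf] at h1 ⊢
    exact ⟨hDA h1.1, h1.2⟩
  have hgen : genNum ↥(A ⊓ B) ≤ (T.card : ℕ∞) :=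
    genNum_le_of_dense (A ⊓ B) T hsub2 (by rw [hTcl]; exact hdense)
  -- arithmetic
  have hnat : T.card ≤ B.index * (nA - 1) + 1 := by
    refine hTcard.trans ?_
    have h1 : Sg.card ≤ nA := (Finset.card_image_le).trans hScard
    have h2 : Sg.card - 1 ≤ nA - 1 := Nat.sub_le_sub_right h1 1
    exact Nat.add_le_add_right (Nat.mul_le_mul_left _ h2) 1
  have hB2 : (B.index : ℕ∞) ≤ genNum ↥B - 2 := by
    apply ENat.le_sub_of_add_le_left (by simp : (2 : ℕ∞) ≠ ⊤)
    rw [hindex B hBo]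
    have h1 : (1 : ℕ∞) ≤ genNum G - 2 := by
      apply ENat.le_sub_of_add_le_left (by simp : (2 : ℕ∞) ≠ ⊤)
      calc (2 : ℕ∞) + 1 = 3 := by norm_num
        _ ≤ genNum G := hd
    calc (2 : ℕ∞) + (B.index : ℕ∞) = 1 * (B.index : ℕ∞) + 2 := by rw [one_mul, add_comm]
      _ ≤ (genNum G - 2) * (B.index : ℕ∞) + 2 := by gcongr
  calc genNum ↥(A ⊓ B) ≤ (T.card : ℕ∞) := hgen
    _ ≤ ((B.index * (nA - 1) + 1 : ℕ) : ℕ∞) := by exact_mod_cast hnat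
    _ = ((nA : ℕ∞) - 1) * (B.index : ℕ∞) + 1 := by
        rw [Nat.cast_add, Nat.cast_mul, Nat.cast_one, ENat.coe_sub, Nat.cast_one, mul_comm]
    _ ≤ (genNum ↥A - 1) * (genNum ↥B - 2) + 1 := by
        refine add_le_add_left (mul_le_mul' ?_ hB2) 1
        rw [hnA]
end
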